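/- arXiv:math/0606743 — 11 statements merged into one kernel-verified Lean document; each statement's English description precedes it below -/
import Mathlib

section
/- For all integers n and j with 0 ≤ j ≤ n, the generalized fibonomial coefficient [n choose j]_F is a positive integer. -/
/-- The generalized fibonomial coefficient `[n choose j]_F` as a rational number:
`(F n * F (n-1) * ⋯ * F (n-j+1)) / (F 1 * F 2 * ⋯ * F j)`, with value `1` for `j = 0`. -/
def fibin (F : ℤ → ℤ) (n : ℤ) (j : ℕ) : ℚ :=
  (∏ i ∈ Finset.range j, (F (n - i) : ℚ)) / ∏ i ∈ Finset.range j, (F ((i : ℤ) + 1) : ℚ)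

lemma Fib_pos_aux (k : ℤ) (hk : 1 ≤ k) (F : ℤ → ℤ)
    (hF0 : F 0 = 0) (hF1 : F 1 = 1)
    (hFrec : ∀ n : ℤ, F (n + 1) = k * F n + F (n - 1)) :
    ∀ m : ℕ, 0 ≤ F m ∧ 1 ≤ F (m + 1) := by
  intro m
  induction m with
  | zero => simp [hF0, hF1]
  | succ m ih =>
    refine ⟨le_trans (by norm_num) ih.2, ?_⟩
    have h := hFrec ((m : ℤ) + 1)
    have e1 : ((m:ℤ)+1) - 1 = (m:ℤ) := by ring
    rw [e1] at h
    have e2 : ((m+1:ℕ):ℤ) + 1 = ((m:ℤ)+1) + 1 := by push_cast; ring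
    rw [e2, h]
    nlinarith [ih.1, ih.2]

lemma Fib_nonneg (k : ℤ) (hk : 1 ≤ k) (F : ℤ → ℤ)
    (hF0 : F 0 = 0) (hF1 : F 1 = 1)
    (hFrec : ∀ n : ℤ, F (n + 1) = k * F n + F (n - 1)) :
    ∀ z : ℤ, 0 ≤ z → 0 ≤ F z := by
  intro z hz
  have h := (Fib_pos_aux k hk F hF0 hF1 hFrec z.toNat).1
  rwa [Int.toNat_of_nonneg hz] at h

lemma Fib_one_le (k : ℤ) (hk : 1 ≤ k) (F : ℤ → ℤ)
    (hF0 : F 0 = 0) (hF1 : F 1 = 1)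
    (hFrec : ∀ n : ℤ, F (n + 1) = k * F n + F (n - 1)) :
    ∀ z : ℤ, 1 ≤ z → 1 ≤ F z := by
  intro z hz
  have h := (Fib_pos_aux k hk F hF0 hF1 hFrec (z-1).toNat).2
  have e : ((z-1).toNat : ℤ) + 1 = z := by omega
  rwa [e] at h

lemma Fib_add (k : ℤ) (hk : 1 ≤ k) (F : ℤ → ℤ)
    (hF0 : F 0 = 0) (hF1 : F 1 = 1)
    (hFrec : ∀ n : ℤ, F (n + 1) = k * F n + F (n - 1)) :
    ∀ b : ℕ, ∀ a : ℤ, F (a + b + 1) = F (a + 1) * F ((b:ℤ) + 1) + F a * F b := by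
  have hF2 : F 2 = k := by
    have h := hFrec 1
    norm_num [hF0, hF1] at h
    exact h
  have main : ∀ b : ℕ,
      (∀ a : ℤ, F (a + b + 1) = F (a + 1) * F ((b:ℤ) + 1) + F a * F b) ∧
      (∀ a : ℤ, F (a + ((b:ℤ) + 1) + 1) = F (a + 1) * F ((b:ℤ) + 2) + F a * F ((b:ℤ)+1)) := by
    intro b
    induction b with
    | zero =>
      constructor
      · intro a; simp [hF0, hF1]
      · intro a
        have h := hFrec (a + 1)
        rw [show a + 1 - 1 = a from by ring] at h
        rw [show ((0:ℕ):ℤ) = (0:ℤ) from by norm_num]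
        rw [show a + ((0:ℤ) + 1) + 1 = a + 1 + 1 from by ring,
            show (0:ℤ) + 2 = 2 from by ring, show (0:ℤ) + 1 = 1 from by ring,
            h, hF1, hF2]
        ring
    | succ b ih =>
      constructor
      · intro a
        have h2 := ih.2 a
        rw [show ((b+1:ℕ):ℤ) = (b:ℤ) + 1 from by push_cast; ring]
        exact h2
      · intro a
        rw [show ((b+1:ℕ):ℤ) = (b:ℤ) + 1 from by push_cast; ring]
        rw [show a + ((b:ℤ) + 1 + 1) + 1 = a + (b:ℤ) + 3 from by ring,
            show (b:ℤ) + 1 + 2 = (b:ℤ) + 3 from by ring,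
            show (b:ℤ) + 1 + 1 = (b:ℤ) + 2 from by ring]
        have h := hFrec (a + (b:ℤ) + 2)
        rw [show a + (b:ℤ) + 2 + 1 = a + (b:ℤ) + 3 from by ring,
            show a + (b:ℤ) + 2 - 1 = a + (b:ℤ) + 1 from by ring] at h
        have h2 := ih.2 a
        rw [show a + ((b:ℤ) + 1) + 1 = a + (b:ℤ) + 2 from by ring] at h2
        have h1 := ih.1 a
        have hb3 := hFrec ((b:ℤ) + 2)
        rw [show (b:ℤ) + 2 + 1 = (b:ℤ) + 3 from by ring,
            show (b:ℤ) + 2 - 1 = (b:ℤ) + 1 from by ring] at hb3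
        have hb2 := hFrec ((b:ℤ) + 1)
        rw [show (b:ℤ) + 1 + 1 = (b:ℤ) + 2 from by ring,
            show (b:ℤ) + 1 - 1 = (b:ℤ) from by ring] at hb2
        linear_combination h + k * h2 + h1 - F (a+1) * hb3 - F a * hb2
  intro b a
  exact (main b).1 a

lemma Fib_key (k : ℤ) (hk : 1 ≤ k) (F : ℤ → ℤ)
    (hF0 : F 0 = 0) (hF1 : F 1 = 1)
    (hFrec : ∀ n : ℤ, F (n + 1) = k * F n + F (n - 1)) :
    ∀ N t : ℕ, t ≤ N → ∃ m : ℤ, 0 < m ∧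
      (∏ i ∈ Finset.range t, F ((N:ℤ) - i)) = m * ∏ i ∈ Finset.range t, F ((i:ℤ) + 1) := by
  intro N
  induction N with
  | zero =>
    intro t ht
    interval_cases t
    exact ⟨1, one_pos, by simp⟩
  | succ M ih =>
    intro t ht
    rcases Nat.eq_zero_or_pos t with rfl | htpos
    · exact ⟨1, one_pos, by simp⟩
    obtain ⟨s, rfl⟩ : ∃ s, t = s + 1 := ⟨t - 1, by omega⟩
    by_cases heq : s + 1 = M + 1
    · -- t = N case : the quotient is 1
      refine ⟨1, one_pos, ?_⟩
      rw [show s = M from by omega, one_mul]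
      have := Finset.prod_range_reflect (fun i => F ((i:ℤ) + 1)) (M + 1)
      rw [← this]
      apply Finset.prod_congr rfl
      intro i hi
      simp only [Finset.mem_range] at hi
      congr 1
      omega
    · -- s + 1 ≤ M
      have hsM : s + 1 ≤ M := by omega
      obtain ⟨m1, hm1pos, hm1⟩ := ih (s+1) hsM
      obtain ⟨m2, hm2pos, hm2⟩ := ih s (by omega)
      refine ⟨F ((s:ℤ) + 2) * m1 + F ((M:ℤ) - s - 1) * m2, ?_, ?_⟩
      · have h1 : 1 ≤ F ((s:ℤ) + 2) := Fib_one_le k hk F hF0 hF1 hFrec _ (by omega)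
        have h2 : 0 ≤ F ((M:ℤ) - s - 1) := Fib_nonneg k hk F hF0 hF1 hFrec _ (by omega)
        nlinarith
      · -- numerator identity
        have e1 : ∏ i ∈ Finset.range (s+1), F (((M+1:ℕ):ℤ) - i)
            = F ((M:ℤ) + 1) * ∏ i ∈ Finset.range s, F ((M:ℤ) - i) := by
          rw [Finset.prod_range_succ']
          rw [mul_comm]
          congr 1
          apply Finset.prod_congr rfl
          intro i _
          congr 1
          omega
        have e2 : ∏ i ∈ Finset.range (s+1), F ((M:ℤ) - i)
            = (∏ i ∈ Finset.range s, F ((M:ℤ) - i)) * F ((M:ℤ) - s) :=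
          Finset.prod_range_succ _ s
        have e3 : ∏ i ∈ Finset.range (s+1), F ((i:ℤ) + 1)
            = (∏ i ∈ Finset.range s, F ((i:ℤ) + 1)) * F ((s:ℤ) + 1) :=
          Finset.prod_range_succ _ s
        have hadd := Fib_add k hk F hF0 hF1 hFrec (M - s - 1) ((s:ℤ) + 1)
        have ec : ((M - s - 1 : ℕ) : ℤ) = (M:ℤ) - s - 1 := by omega
        rw [ec] at hadd
        have ec2 : (s:ℤ) + 1 + ((M:ℤ) - s - 1) + 1 = (M:ℤ) + 1 := by ring
        have ec3 : ((M:ℤ) - s - 1) + 1 = (M:ℤ) - s := by ring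
        rw [ec2, ec3] at hadd
        have ec4 : (s:ℤ) + 1 + 1 = (s:ℤ) + 2 := by ring
        rw [ec4] at hadd
        -- hadd : F (M+1) = F (s+2) * F (M - s) + F (s+1) * F (M - s - 1)
        rw [e1, e3]
        rw [e2] at hm1
        rw [hadd]
        linear_combination (F ((s:ℤ)+2)) * hm1
          + (F ((s:ℤ)+1) * F ((M:ℤ) - s - 1)) * hm2
          + (F ((s:ℤ)+2) * m1) * e3

theorem fibin_int_pos (k : ℤ) (hk : 1 ≤ k) (F : ℤ → ℤ)
    (hF0 : F 0 = 0) (hF1 : F 1 = 1)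
    (hFrec : ∀ n : ℤ, F (n + 1) = k * F n + F (n - 1)) :
    ∀ n j : ℤ, 0 ≤ j → j ≤ n →
      ∃ m : ℤ, 0 < m ∧ fibin F n j.toNat = (m : ℚ) := by
  intro n j hj hjn
  obtain ⟨m, hmpos, hm⟩ := Fib_key k hk F hF0 hF1 hFrec n.toNat j.toNat (by omega)
  refine ⟨m, hmpos, ?_⟩
  have hn : ((n.toNat : ℕ) : ℤ) = n := by omega
  have hden_pos : 0 < ∏ i ∈ Finset.range j.toNat, F ((i:ℤ) + 1) := by
    apply Finset.prod_pos
    intro i _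
    have := Fib_one_le k hk F hF0 hF1 hFrec ((i:ℤ)+1) (by omega)
    omega
  rw [hn] at hm
  unfold fibin
  rw [div_eq_iff]
  · push_cast [← Int.cast_prod]
    exact_mod_cast hm
  · have : ((∏ i ∈ Finset.range j.toNat, F ((i:ℤ) + 1) : ℤ) : ℚ) ≠ 0 := by
      exact_mod_cast hden_pos.ne'
    simpa using this
end

section
/- Let α ≥ 1 and n ≥ 0 be integers, and let A be the (n+1)×(n+1) matrix with rational entries A_{j,m} = 1/F_{α+j+m} for 0 ≤ j, m ≤ n. Then A is invertible and every entry of A⁻¹ is an integer (i.e., A⁻¹ is the image of an integer matrix); in particular, for k = 1 and α = 1 this recovers Richardson's theorem that the inverse of the Filbert matrix (1/F_{i+j+1}) has only integer entries. -/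
namespace HankelAux

variable {k : ℤ} {F : ℤ → ℤ}




lemma Faux (hk : 1 ≤ k) (hF0 : F 0 = 0) (hF1 : F 1 = 1)
    (hFrec : ∀ n : ℤ, F (n + 1) = k * F n + F (n - 1)) :
    ∀ n : ℕ, 0 ≤ F n ∧ 1 ≤ F ((n : ℤ) + 1) := by
  intro n
  induction n with
  | zero => simp [hF0, hF1]
  | succ n ih =>
    have h' : F ((n : ℤ) + 1 + 1) = k * F ((n : ℤ) + 1) + F n := by
      simpa using hFrec ((n : ℤ) + 1)
    refine ⟨by push_cast; linarith [ih.2], ?_⟩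
    push_cast
    nlinarith [ih.1, ih.2]

lemma Fpos (hk : 1 ≤ k) (hF0 : F 0 = 0) (hF1 : F 1 = 1)
    (hFrec : ∀ n : ℤ, F (n + 1) = k * F n + F (n - 1)) :
    ∀ j : ℤ, 1 ≤ j → 1 ≤ F j := by
  intro j hj
  have hn : j = ((j - 1).toNat : ℤ) + 1 := by omega
  rw [hn]
  exact (Faux hk hF0 hF1 hFrec (j - 1).toNat).2

lemma FnegNat (hF0 : F 0 = 0) (hF1 : F 1 = 1)
    (hFrec : ∀ n : ℤ, F (n + 1) = k * F n + F (n - 1)) :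
    ∀ n : ℕ, F (-(n : ℤ)) = (-1 : ℤ) ^ (n + 1) * F (n : ℤ) := by
  have key : ∀ n : ℕ, F (-(n : ℤ)) = (-1 : ℤ) ^ (n + 1) * F (n : ℤ) ∧
      F (-((n : ℤ) + 1)) = (-1 : ℤ) ^ (n + 2) * F ((n : ℤ) + 1) := by
    intro n
    induction n with
    | zero =>
      have h := hFrec 0
      refine ⟨by simp [hF0], ?_⟩
      norm_num [hF0, hF1] at h ⊢
      omega
    | succ n ih =>
      refine ⟨by push_cast; simpa using ih.2, ?_⟩
      have h := hFrec (-(n : ℤ) - 1)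
      have h2 : F (-((n:ℤ)+1+1)) = F (-(n:ℤ)) - k * F (-((n:ℤ)+1)) := by
        have e0 : (-(n:ℤ) - 1 + 1) = -(n:ℤ) := by ring
        have e1 : (-(n:ℤ) - 1 - 1) = -((n:ℤ)+1+1) := by ring
        have e2 : (-(n:ℤ) - 1) = -((n:ℤ)+1) := by ring
        rw [e0, e1, e2] at h
        linarith
      have hrec2 : F ((n:ℤ)+1+1) = k * F ((n:ℤ)+1) + F (n:ℤ) := by
        simpa using hFrec ((n:ℤ)+1)
      push_cast
      rw [show -((n:ℤ)+1+1) = -((n:ℤ)+1+1) from rfl] at h2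
      rw [h2, ih.1, ih.2, hrec2]
      ring
  intro n; exact (key n).1

lemma Fneg (hF0 : F 0 = 0) (hF1 : F 1 = 1)
    (hFrec : ∀ n : ℤ, F (n + 1) = k * F n + F (n - 1)) :
    ∀ j : ℤ, 0 ≤ j → F (-j) = F j ∨ F (-j) = - F j := by
  intro j hj
  obtain ⟨n, rfl⟩ := Int.eq_ofNat_of_zero_le hj
  have h := FnegNat hF0 hF1 hFrec n
  rcases Nat.even_or_odd (n + 1) with he | ho
  · left; rw [h, he.neg_one_pow, one_mul]
  · right; rw [h, ho.neg_one_pow, neg_one_mul]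





/-- addition formula -/
lemma Fadd (hF0 : F 0 = 0) (hF1 : F 1 = 1)
    (hFrec : ∀ n : ℤ, F (n + 1) = k * F n + F (n - 1)) :
    ∀ a b : ℤ, F (a + b) = F (a + 1) * F b + F a * F (b - 1) := by
  have key : ∀ a : ℤ,
      (∀ b : ℤ, F (a + b) = F (a + 1) * F b + F a * F (b - 1)) ∧
      (∀ b : ℤ, F (a + 1 + b) = F (a + 1 + 1) * F b + F (a + 1) * F (b - 1)) := by
    intro a
    induction a using Int.induction_on with
    | zero =>
      constructor
      · intro b; simp [hF0, hF1]
      · intro b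
        have h1 : F 2 = k := by
          have := hFrec 1
          norm_num [hF0, hF1] at this
          omega
        have h2 := hFrec b
        norm_num [hF1, h1]
        rw [show (1:ℤ) + b = b + 1 by ring]
        rw [h2]
    | succ a ih =>
      refine ⟨ih.2, ?_⟩
      intro b
      have r1 := ih.1 b
      have r2 := ih.2 b
      have h3 : F ((a:ℤ) + 1 + 1 + b) = k * F ((a:ℤ) + 1 + b) + F ((a:ℤ) + b) := by
        have := hFrec ((a:ℤ) + 1 + b)
        rw [show (a:ℤ) + 1 + b + 1 = (a:ℤ) + 1 + 1 + b by ring,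
          show (a:ℤ) + 1 + b - 1 = (a:ℤ) + b by ring] at this
        exact this
      have h4 : F ((a:ℤ) + 1 + 1 + 1) = k * F ((a:ℤ) + 1 + 1) + F ((a:ℤ) + 1) := by
        have := hFrec ((a:ℤ) + 1 + 1)
        rw [show (a:ℤ) + 1 + 1 - 1 = (a:ℤ) + 1 by ring] at this
        exact this
      have h6 : F ((a:ℤ) + 1 + 1) = k * F ((a:ℤ) + 1) + F (a:ℤ) := by
        have := hFrec ((a:ℤ) + 1)
        rw [show (a:ℤ) + 1 - 1 = (a:ℤ) by ring] at this
        exact this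
      rw [h3, r1, r2]
      linear_combination (-(F b)) * h4 + (-(F (b - 1))) * h6
    | pred a ih =>
      refine ⟨?_, by
        intro b
        have := ih.1 b
        rw [show (-(a:ℤ) - 1 + 1) = -(a:ℤ) by ring]
        exact this⟩
      intro b
      have r1 := ih.1 b
      have r2 := ih.2 b
      have h3 : F (-(a:ℤ) - 1 + b) = F (-(a:ℤ) + 1 + b) - k * F (-(a:ℤ) + b) := by
        have := hFrec (-(a:ℤ) + b)
        rw [show -(a:ℤ) + b + 1 = -(a:ℤ) + 1 + b by ring,
          show -(a:ℤ) + b - 1 = -(a:ℤ) - 1 + b by ring] at this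
        linarith
      have h4 : F (-(a:ℤ) + 1 + 1) = k * F (-(a:ℤ) + 1) + F (-(a:ℤ)) := by
        have := hFrec (-(a:ℤ) + 1)
        rw [show -(a:ℤ) + 1 - 1 = -(a:ℤ) by ring] at this
        exact this
      have h5 : F (-(a:ℤ) + 1) = k * F (-(a:ℤ)) + F (-(a:ℤ) - 1) := by
        have := hFrec (-(a:ℤ))
        rw [show -(a:ℤ) - 1 = -(a:ℤ) + 1 - 1 - 1 by ring] at this
        rw [show -(a:ℤ) + 1 - 1 - 1 = -(a:ℤ) - 1 by ring] at this
        exact this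
      rw [h3, r1, r2]
      rw [show (-(a:ℤ) - 1 + 1) = -(a:ℤ) by ring]
      linear_combination F b * h4 + F (b - 1) * h5
  intro a b; exact (key a).1 b





lemma binet (hF0 : F 0 = 0) (hF1 : F 1 = 1)
    (hFrec : ∀ n : ℤ, F (n + 1) = k * F n + F (n - 1))
    (φ ψ : ℝ) (hφ : φ ≠ 0) (hψ : ψ ≠ 0)
    (hquadφ : φ ^ 2 = k * φ + 1) (hquadψ : ψ ^ 2 = k * ψ + 1) :
    ∀ j : ℤ, (F j : ℝ) * (φ - ψ) = φ ^ j - ψ ^ j := by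
  have stepφ : ∀ j : ℤ, φ ^ (j + 1) = k * φ ^ j + φ ^ (j - 1) := by
    intro j
    have h1 : φ ^ j = φ ^ (j - 1) * φ := by
      rw [← zpow_add_one₀ hφ]; norm_num
    rw [zpow_add_one₀ hφ, h1]
    linear_combination (φ ^ (j - 1)) * hquadφ
  have stepψ : ∀ j : ℤ, ψ ^ (j + 1) = k * ψ ^ j + ψ ^ (j - 1) := by
    intro j
    have h1 : ψ ^ j = ψ ^ (j - 1) * ψ := by
      rw [← zpow_add_one₀ hψ]; norm_num
    rw [zpow_add_one₀ hψ, h1]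
    linear_combination (ψ ^ (j - 1)) * hquadψ
  have key : ∀ j : ℤ, ((F j : ℝ) * (φ - ψ) = φ ^ j - ψ ^ j) ∧
      ((F (j + 1) : ℝ) * (φ - ψ) = φ ^ (j + 1) - ψ ^ (j + 1)) := by
    intro j
    induction j using Int.induction_on with
    | zero => constructor <;> simp [hF0, hF1]
    | succ a ih =>
      refine ⟨ih.2, ?_⟩
      have hrec : F ((a : ℤ) + 1 + 1) = k * F ((a : ℤ) + 1) + F (a : ℤ) := by
        have := hFrec ((a : ℤ) + 1)
        rw [show (a : ℤ) + 1 - 1 = (a : ℤ) by ring] at this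
        exact this
      have s1 := stepφ ((a : ℤ) + 1)
      have s2 := stepψ ((a : ℤ) + 1)
      rw [show (a : ℤ) + 1 - 1 = (a : ℤ) by ring] at s1 s2
      push_cast
      push_cast at ih
      rw [hrec]
      push_cast
      rw [s1, s2]
      linear_combination (k : ℝ) * ih.2 + ih.1
    | pred a ih =>
      refine ⟨?_, by
        have := ih.1
        rw [show (-(a : ℤ) - 1 + 1) = -(a : ℤ) by ring]
        exact this⟩
      have hrec : F (-(a : ℤ) - 1) = F (-(a : ℤ) + 1) - k * F (-(a : ℤ)) := by
        have := hFrec (-(a : ℤ))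
        rw [show -(a : ℤ) - 1 = -(a : ℤ) + 1 - 1 - 1 by ring] at this
        rw [show -(a : ℤ) + 1 - 1 - 1 = -(a : ℤ) - 1 by ring] at this
        linarith
      have s1 := stepφ (-(a : ℤ))
      have s2 := stepψ (-(a : ℤ))
      rw [show -(a : ℤ) - 1 = -(a : ℤ) - 1 by ring] at s1 s2
      rw [show -(a : ℤ) + 1 = -(a : ℤ) + 1 by ring] at s1 s2
      rw [hrec]
      push_cast
      have e1 := ih.1
      have e2 := ih.2
      rw [show -(a : ℤ) + 1 = -(a : ℤ) + 1 by ring] at e2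
      linear_combination e2 - (k : ℝ) * e1 + s1 - s2
  intro j; exact (key j).1





lemma d_dvd (hF0 : F 0 = 0) (hF1 : F 1 = 1)
    (hFrec : ∀ n : ℤ, F (n + 1) = k * F n + F (n - 1)) :
    ∀ r c : ℕ, (∏ t ∈ Finset.range r, F ((t : ℤ) + 1)) ∣
      ∏ t ∈ Finset.range r, F ((c : ℤ) + (t : ℤ) + 1) := by
  have hFadd := Fadd hF0 hF1 hFrec
  intro r
  induction r with
  | zero => simp
  | succ r ihr =>
    intro c
    induction c with
    | zero =>
      apply dvd_of_eq
      apply Finset.prod_congr rfl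
      intro t _
      norm_num
    | succ c ihc =>
      have peel : (∏ t ∈ Finset.range (r + 1), F ((c : ℤ) + (t : ℤ) + 1))
          = (∏ t ∈ Finset.range r, F (((c : ℕ) + 1 : ℤ) + (t : ℤ) + 1)) * F ((c : ℤ) + 1) := by
        rw [Finset.prod_range_succ']
        congr 1
        apply Finset.prod_congr rfl
        intro t _
        congr 1
        push_cast
        ring
      have hadd : F (((c : ℕ) + 1 : ℤ) + (r : ℤ) + 1)
          = F ((r : ℤ) + 1 + 1) * F ((c : ℤ) + 1) + F ((r : ℤ) + 1) * F (c : ℤ) := by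
        have h := hFadd ((r : ℤ) + 1) ((c : ℤ) + 1)
        rw [show (c : ℤ) + 1 - 1 = (c : ℤ) by ring] at h
        rw [show ((c : ℕ) + 1 : ℤ) + (r : ℤ) + 1 = (r : ℤ) + 1 + ((c : ℤ) + 1) by push_cast; ring]
        exact h
      have key : (∏ t ∈ Finset.range (r + 1), F ((((c : ℕ) + 1 : ℕ) : ℤ) + (t : ℤ) + 1))
          = F ((r : ℤ) + 1 + 1) * (∏ t ∈ Finset.range (r + 1), F ((c : ℤ) + (t : ℤ) + 1))
            + F ((r : ℤ) + 1) * F (c : ℤ) *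
              (∏ t ∈ Finset.range r, F ((((c : ℕ) + 1 : ℕ) : ℤ) + (t : ℤ) + 1)) := by
        push_cast
        rw [Finset.prod_range_succ, hadd, peel]
        push_cast
        ring
      rw [key]
      apply dvd_add
      · exact Dvd.dvd.mul_left ihc _
      · have hd : (∏ t ∈ Finset.range (r + 1), F ((t : ℤ) + 1))
            = (∏ t ∈ Finset.range r, F ((t : ℤ) + 1)) * F ((r : ℤ) + 1) := by
          rw [Finset.prod_range_succ]
        rw [hd]
        have h2 := ihr (c + 1)
        calc (∏ t ∈ Finset.range r, F ((t : ℤ) + 1)) * F ((r : ℤ) + 1)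
            ∣ (∏ t ∈ Finset.range r, F ((((c : ℕ) + 1 : ℕ) : ℤ) + (t : ℤ) + 1)) * F ((r : ℤ) + 1) :=
              mul_dvd_mul_right h2 _
          _ ∣ _ := ⟨F (c : ℤ), by ring⟩








-- new ones
lemma Fne0 (hk : 1 ≤ k) (hF0 : F 0 = 0) (hF1 : F 1 = 1)
    (hFrec : ∀ n : ℤ, F (n + 1) = k * F n + F (n - 1)) :
    ∀ j : ℤ, j ≠ 0 → F j ≠ 0 := by
  intro j hj
  rcases lt_or_gt_of_ne hj with h | h
  · have h1 : 1 ≤ -j := by omega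
    have h2 := Fpos hk hF0 hF1 hFrec (-j) h1
    have h3 := Fneg hF0 hF1 hFrec (-j) (by omega)
    rw [neg_neg] at h3
    rcases h3 with h3 | h3 <;> omega
  · have := Fpos hk hF0 hF1 hFrec j (by omega)
    omega

lemma d_dvd_int (hF0 : F 0 = 0) (hF1 : F 1 = 1)
    (hFrec : ∀ n : ℤ, F (n + 1) = k * F n + F (n - 1))
    (r : ℕ) (a : ℤ) (ha : 1 ≤ a) :
    (∏ t ∈ Finset.range r, F ((t : ℤ) + 1)) ∣ ∏ t ∈ Finset.range r, F (a + (t : ℤ)) := by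
  have h := d_dvd hF0 hF1 hFrec r (a - 1).toNat
  have he : ∀ t ∈ Finset.range r, F (((a - 1).toNat : ℤ) + (t : ℤ) + 1) = F (a + (t : ℤ)) := by
    intro t _
    congr 1
    omega
  rwa [Finset.prod_congr rfl he] at h

lemma prod_erase_split (f : ℕ → ℤ) (n i : ℕ) (hi : i < n + 1) :
    ∏ t ∈ (Finset.range (n + 1)).erase i, f t
      = (∏ t ∈ Finset.range i, f t) * (∏ t ∈ Finset.Ico (i + 1) (n + 1), f t) := by
  have hset : (Finset.range (n + 1)).erase i = Finset.range i ∪ Finset.Ico (i + 1) (n + 1) := by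
    ext t
    simp only [Finset.mem_erase, Finset.mem_range, Finset.mem_union, Finset.mem_Ico]
    omega
  rw [hset, Finset.prod_union]
  rw [Finset.disjoint_left]
  intro t ht ht'
  simp only [Finset.mem_range] at ht
  simp only [Finset.mem_Ico] at ht'
  omega

lemma prod_pm {f g : ℕ → ℤ} {S : Finset ℕ} (h : ∀ x ∈ S, f x = g x ∨ f x = -g x) :
    (∏ x ∈ S, f x) = (∏ x ∈ S, g x) ∨ (∏ x ∈ S, f x) = -(∏ x ∈ S, g x) := by
  induction S using Finset.cons_induction with
  | empty => left; simp
  | cons x s hx ih =>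
    have hx' := h x (Finset.mem_cons_self x s)
    have ih' := ih fun y hy => h y (Finset.mem_cons.mpr (Or.inr hy))
    rw [Finset.prod_cons, Finset.prod_cons]
    rcases hx' with h1 | h1 <;> rcases ih' with h2 | h2 <;> rw [h1, h2]
    · left; rfl
    · right; ring
    · right; ring
    · left; ring

lemma dvd_pm {a b a' b' : ℤ} (ha : a = a' ∨ a = -a') (hb : b = b' ∨ b = -b')
    (h : a' ∣ b') : a ∣ b := by
  rcases ha with rfl | rfl <;> rcases hb with rfl | rfl <;>
    simp [neg_dvd, dvd_neg, h]

lemma pm_mul {a b a' b' : ℤ} (ha : a = a' ∨ a = -a') (hb : b = b' ∨ b = -b') :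
    a * b = a' * b' ∨ a * b = -(a' * b') := by
  rcases ha with rfl | rfl <;> rcases hb with rfl | rfl
  · left; rfl
  · right; ring
  · right; ring
  · left; ring




lemma span_prod (φ ψ : ℝ) (hφ : φ ≠ 0) (hψ : ψ ≠ 0) (hsub : φ - ψ ≠ 0)
    (hB : ∀ j : ℤ, (F j : ℝ) * (φ - ψ) = φ ^ j - ψ ^ j)
    (S : Finset ℕ) (c : ℕ → ℤ) :
    ∃ d : ℕ → ℝ, ∀ j : ℤ, (∏ t ∈ S, (F (c t + j) : ℝ))
      = ∑ a ∈ Finset.range (S.card + 1), d a * (φ ^ a * ψ ^ (S.card - a)) ^ j := by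
  induction S using Finset.cons_induction with
  | empty =>
    refine ⟨fun _ => 1, ?_⟩
    intro j
    simp [one_zpow]
  | cons x s hx ih =>
    obtain ⟨d, hd⟩ := ih
    refine ⟨fun a => (if 1 ≤ a then φ ^ (c x) * d (a - 1) else 0) / (φ - ψ)
      + (if a ≤ s.card then -(ψ ^ (c x)) * d a else 0) / (φ - ψ), ?_⟩
    intro j
    rw [Finset.prod_cons, hd j, Finset.card_cons]
    have hFx : (F (c x + j) : ℝ) = (φ ^ (c x) * φ ^ j - ψ ^ (c x) * ψ ^ j) / (φ - ψ) := by
      rw [eq_div_iff hsub]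
      have h := hB (c x + j)
      rw [zpow_add₀ hφ, zpow_add₀ hψ] at h
      exact h
    have h1 : ∑ a ∈ Finset.range (s.card + 1 + 1),
        ((if 1 ≤ a then φ ^ (c x) * d (a - 1) else 0) / (φ - ψ)) * (φ ^ a * ψ ^ (s.card + 1 - a)) ^ j
        = (φ ^ (c x) * φ ^ j / (φ - ψ)) *
          ∑ a ∈ Finset.range (s.card + 1), d a * (φ ^ a * ψ ^ (s.card - a)) ^ j := by
      rw [Finset.sum_range_succ']
      norm_num
      rw [Finset.mul_sum]
      apply Finset.sum_congr rfl
      intro a _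
      have e1 : s.card + 1 - (a + 1) = s.card - a := by omega
      rw [e1]
      have e2 : (φ ^ (a + 1) * ψ ^ (s.card - a)) ^ j
          = φ ^ j * (φ ^ a * ψ ^ (s.card - a)) ^ j := by
        rw [pow_succ]
        rw [show φ ^ a * φ * ψ ^ (s.card - a) = φ * (φ ^ a * ψ ^ (s.card - a)) by ring]
        rw [mul_zpow]
      rw [e2]
      ring
    have h2 : ∑ a ∈ Finset.range (s.card + 1 + 1),
        ((if a ≤ s.card then -(ψ ^ (c x)) * d a else 0) / (φ - ψ)) * (φ ^ a * ψ ^ (s.card + 1 - a)) ^ j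
        = (-(ψ ^ (c x)) * ψ ^ j / (φ - ψ)) *
          ∑ a ∈ Finset.range (s.card + 1), d a * (φ ^ a * ψ ^ (s.card - a)) ^ j := by
      rw [Finset.sum_range_succ]
      norm_num
      rw [Finset.mul_sum]
      apply Finset.sum_congr rfl
      intro a ha
      have ha' : a ≤ s.card := by
        simp only [Finset.mem_range] at ha; omega
      rw [if_pos ha']
      have e1 : s.card + 1 - a = (s.card - a) + 1 := by omega
      rw [e1]
      have e2 : (φ ^ a * ψ ^ (s.card - a + 1)) ^ j
          = ψ ^ j * (φ ^ a * ψ ^ (s.card - a)) ^ j := by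
        rw [pow_succ]
        rw [show φ ^ a * (ψ ^ (s.card - a) * ψ) = ψ * (φ ^ a * ψ ^ (s.card - a)) by ring]
        rw [mul_zpow]
      rw [e2]
      ring
    simp_rw [add_mul]
    rw [Finset.sum_add_distrib, h1, h2, hFx]
    ring



lemma exp_unique (n : ℕ) (μ : Fin (n + 1) → ℝ) (hμ0 : ∀ a, μ a ≠ 0)
    (hinj : Function.Injective μ) (d : Fin (n + 1) → ℝ) (j0 : ℤ)
    (hvan : ∀ t : Fin (n + 1), ∑ a, d a * μ a ^ (j0 + ((t : ℕ) : ℤ)) = 0) :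
    ∀ a, d a = 0 := by
  have hM : (Matrix.transpose (Matrix.vandermonde μ)).mulVec (fun a => d a * μ a ^ j0) = 0 := by
    funext t
    have h := hvan t
    simp only [Matrix.mulVec, Matrix.transpose_apply, Matrix.vandermonde, 
      Matrix.of_apply, Pi.zero_apply, dotProduct]
    rw [← h]
    apply Finset.sum_congr rfl
    intro a _
    rw [zpow_add₀ (hμ0 a), zpow_natCast]
    ring
  have hdet : (Matrix.transpose (Matrix.vandermonde μ)).det ≠ 0 := by
    rw [Matrix.det_transpose, Matrix.det_vandermonde_ne_zero_iff]
    exact hinj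
  have hz := Matrix.eq_zero_of_mulVec_eq_zero hdet hM
  intro a
  have hw := congrFun hz a
  simp only [Pi.zero_apply] at hw
  have := zpow_ne_zero j0 (hμ0 a)
  exact (mul_eq_zero.mp hw).resolve_right this










section Defs
variable (F)
def dZ : ℕ → ℤ := fun r => ∏ t ∈ Finset.range r, F ((t : ℤ) + 1)
def PZ (α : ℤ) (n i : ℕ) : ℤ := ∏ t ∈ Finset.range (n + 1), F (α + (t : ℤ) + (i : ℤ))
def QiZ (n i : ℕ) : ℤ := ∏ t ∈ (Finset.range (n + 1)).erase i, F ((i : ℤ) - (t : ℤ))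
def RZ (n m : ℕ) : ℤ := ∏ t ∈ (Finset.range (n + 1)).erase m, F ((t : ℤ) - (m : ℤ))
def QZ (α : ℤ) (n i m : ℕ) : ℤ :=
  ∏ t ∈ (Finset.range (n + 1)).erase i, F (-α - (m : ℤ) - (t : ℤ))
def Qpos (α : ℤ) (n i m : ℕ) : ℤ :=
  ∏ t ∈ (Finset.range (n + 1)).erase i, F (α + (m : ℤ) + (t : ℤ))
end Defs



section QiPf

variable (hk : 1 ≤ k) (hF0 : F 0 = 0) (hF1 : F 1 = 1)
  (hFrec : ∀ n : ℤ, F (n + 1) = k * F n + F (n - 1))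
include hk hF0 hF1 hFrec

lemma QiZ_pm (n i : ℕ) (hi : i < n + 1) :
    QiZ F n i = dZ F i * dZ F (n - i) ∨ QiZ F n i = -(dZ F i * dZ F (n - i)) := by
  rw [QiZ, prod_erase_split _ n i hi]
  have h1 : (∏ t ∈ Finset.range i, F ((i : ℤ) - (t : ℤ))) = dZ F i := by
    rw [dZ, ← Finset.prod_range_reflect]
    apply Finset.prod_congr rfl
    intro t ht
    simp only [Finset.mem_range] at ht
    congr 1
    omega
  have h2 : (∏ t ∈ Finset.Ico (i + 1) (n + 1), F ((i : ℤ) - (t : ℤ)))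
        = (∏ t ∈ Finset.range (n - i), F (-((t : ℤ) + 1))) := by
    rw [Finset.prod_Ico_eq_prod_range]
    apply Finset.prod_congr (by congr 1; omega)
    intro t _
    congr 1
    push_cast
    ring
  rw [h1, h2]
  have h3 := prod_pm (f := fun t => F (-((t : ℤ) + 1))) (g := fun t => F ((t : ℤ) + 1))
    (S := Finset.range (n - i)) (fun x _ => Fneg hF0 hF1 hFrec ((x : ℤ) + 1) (by positivity))
  have e : (∏ x ∈ Finset.range (n - i), F ((x : ℤ) + 1)) = dZ F (n - i) := rfl
  rcases h3 with h3 | h3 <;> rw [h3, e]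
  · left; rfl
  · right; ring

end QiPf

section DivPf
variable (hF0 : F 0 = 0) (hF1 : F 1 = 1)
  (hFrec : ∀ n : ℤ, F (n + 1) = k * F n + F (n - 1))
include hF0 hF1 hFrec

lemma RZ_pm (n m : ℕ) (hm : m < n + 1) :
    RZ F n m = dZ F m * dZ F (n - m) ∨ RZ F n m = -(dZ F m * dZ F (n - m)) := by
  rw [RZ, prod_erase_split _ n m hm]
  have h2 : (∏ t ∈ Finset.Ico (m + 1) (n + 1), F ((t : ℤ) - (m : ℤ)))
      = dZ F (n - m) := by
    rw [Finset.prod_Ico_eq_prod_range, dZ]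
    apply Finset.prod_congr (by congr 1; omega)
    intro t _
    congr 1
    push_cast
    ring
  have h1 : (∏ t ∈ Finset.range m, F ((t : ℤ) - (m : ℤ)))
      = (∏ t ∈ Finset.range m, F (-((t : ℤ) + 1))) := by
    rw [← Finset.prod_range_reflect (fun t => F ((t : ℤ) - (m : ℤ))) m]
    apply Finset.prod_congr rfl
    intro t ht
    simp only [Finset.mem_range] at ht
    congr 1
    omega
  rw [h1, h2]
  have h3 := prod_pm (f := fun t => F (-((t : ℤ) + 1))) (g := fun t => F ((t : ℤ) + 1))
    (S := Finset.range m) (fun x _ => Fneg hF0 hF1 hFrec ((x : ℤ) + 1) (by positivity))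
  have e : (∏ x ∈ Finset.range m, F ((x : ℤ) + 1)) = dZ F m := rfl
  rcases h3 with h3 | h3 <;> rw [h3, e]
  · left; rfl
  · right; ring

lemma QZ_pm (α : ℤ) (hα : 1 ≤ α) (n i m : ℕ) :
    QZ F α n i m = Qpos F α n i m ∨ QZ F α n i m = -(Qpos F α n i m) := by
  rw [QZ, Qpos]
  have h1 : (∏ t ∈ (Finset.range (n + 1)).erase i, F (-α - (m : ℤ) - (t : ℤ)))
      = (∏ t ∈ (Finset.range (n + 1)).erase i, F (-(α + (m : ℤ) + (t : ℤ)))) := by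
    apply Finset.prod_congr rfl
    intro t _
    congr 1
    ring
  rw [h1]
  exact prod_pm (fun x _ => Fneg hF0 hF1 hFrec (α + (m : ℤ) + (x : ℤ)) (by positivity))

lemma Qpos_dvd (α : ℤ) (hα : 1 ≤ α) (n i m : ℕ) (hi : i < n + 1) :
    dZ F i * dZ F (n - i) ∣ Qpos F α n i m := by
  rw [Qpos, prod_erase_split _ n i hi]
  apply mul_dvd_mul
  · have h := d_dvd_int hF0 hF1 hFrec i (α + (m : ℤ)) (by omega)
    rw [dZ]
    convert h using 1
  · have h := d_dvd_int hF0 hF1 hFrec (n - i) (α + (m : ℤ) + (i : ℤ) + 1) (by omega)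
    rw [dZ, Finset.prod_Ico_eq_prod_range]
    convert h using 1
    · rfl
    apply Finset.prod_congr (by congr 1; omega)
    intro t _
    congr 1
    push_cast
    ring

lemma PZ_dvd (α : ℤ) (hα : 1 ≤ α) (n i m : ℕ) (hm : m < n + 1) :
    dZ F m * dZ F (n - m) ∣ PZ F α n i := by
  rw [PZ]
  have hsplit : (∏ t ∈ Finset.range (n + 1), F (α + (t : ℤ) + (i : ℤ)))
      = (∏ t ∈ Finset.range m, F (α + (t : ℤ) + (i : ℤ)))
        * ∏ t ∈ Finset.Ico m (n + 1), F (α + (t : ℤ) + (i : ℤ)) := by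
    rw [Finset.range_eq_Ico, ← Finset.prod_Ico_consecutive _ (by omega : 0 ≤ m) (by omega : m ≤ n + 1), ← Finset.range_eq_Ico]
  rw [hsplit]
  apply mul_dvd_mul
  · have h := d_dvd_int hF0 hF1 hFrec m (α + (i : ℤ)) (by omega)
    rw [dZ]
    convert h using 1
    · rfl
    apply Finset.prod_congr rfl
    intro t _
    congr 1
    ring
  · rw [Finset.prod_Ico_eq_prod_range]
    have hn : n + 1 - m = (n - m) + 1 := by omega
    rw [hn, Finset.prod_range_succ]
    apply Dvd.dvd.mul_right
    have h := d_dvd_int hF0 hF1 hFrec (n - m) (α + (m : ℤ) + (i : ℤ)) (by omega)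
    rw [dZ]
    convert h using 1
    · rfl
    apply Finset.prod_congr rfl
    intro t _
    congr 1
    push_cast
    ring

lemma dvd_main (hk : 1 ≤ k) (α : ℤ) (hα : 1 ≤ α) (n i m : ℕ) (hi : i < n + 1) (hm : m < n + 1) :
    QiZ F n i * RZ F n m ∣ PZ F α n i * QZ F α n i m := by
  have h1 := QiZ_pm hk hF0 hF1 hFrec n i hi
  have h2 := RZ_pm hF0 hF1 hFrec n m hm
  have h3 := QZ_pm hF0 hF1 hFrec α hα n i m
  have hb : PZ F α n i * QZ F α n i m = PZ F α n i * Qpos F α n i m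
      ∨ PZ F α n i * QZ F α n i m = -(PZ F α n i * Qpos F α n i m) :=
    pm_mul (Or.inl rfl) h3
  have ha : QiZ F n i * RZ F n m
      = (dZ F m * dZ F (n - m)) * (dZ F i * dZ F (n - i))
      ∨ QiZ F n i * RZ F n m
      = -((dZ F m * dZ F (n - m)) * (dZ F i * dZ F (n - i))) := by
    have := pm_mul h1 h2
    rcases this with h | h <;> rw [h]
    · left; ring
    · right; ring
  refine dvd_pm ha hb ?_
  exact mul_dvd_mul (PZ_dvd hF0 hF1 hFrec α hα n i m hm) (Qpos_dvd hF0 hF1 hFrec α hα n i m hi)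

end DivPf

end HankelAux

theorem hankel_inverse_integer_entries (k : ℤ) (hk : 1 ≤ k) (F : ℤ → ℤ)
    (hF0 : F 0 = 0) (hF1 : F 1 = 1)
    (hFrec : ∀ n : ℤ, F (n + 1) = k * F n + F (n - 1))
    (α : ℤ) (hα : 1 ≤ α) (n : ℕ)
    (A : Matrix (Fin (n + 1)) (Fin (n + 1)) ℚ)
    (hA : ∀ j m : Fin (n + 1), A j m = (1 : ℚ) / (F (α + (j : ℕ) + (m : ℕ)) : ℚ)) :
    IsUnit A ∧ ∃ B : Matrix (Fin (n + 1)) (Fin (n + 1)) ℤ,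
      A⁻¹ = B.map (Int.cast : ℤ → ℚ) := by
  classical
  open HankelAux in
  have hFpos := HankelAux.Fpos hk hF0 hF1 hFrec
  have hFne0 := HankelAux.Fne0 hk hF0 hF1 hFrec
  -- roots of x^2 = k x + 1
  obtain ⟨φ, ψ, hφ0, hψ0, hsub, hq1, hq2, hφ1, hφψ⟩ :
      ∃ φ ψ : ℝ, φ ≠ 0 ∧ ψ ≠ 0 ∧ φ - ψ ≠ 0 ∧ φ ^ 2 = (k : ℝ) * φ + 1 ∧
        ψ ^ 2 = (k : ℝ) * ψ + 1 ∧ 1 < φ ∧ φ * ψ = -1 := by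
    have hk1 : (1 : ℝ) ≤ (k : ℝ) := by exact_mod_cast hk
    set s : ℝ := Real.sqrt ((k : ℝ) ^ 2 + 4) with hsdef
    have hs4 : (0 : ℝ) < (k : ℝ) ^ 2 + 4 := by positivity
    have hs : s ^ 2 = (k : ℝ) ^ 2 + 4 := Real.sq_sqrt hs4.le
    have hspos : 0 < s := Real.sqrt_pos.mpr hs4
    refine ⟨((k : ℝ) + s) / 2, ((k : ℝ) - s) / 2, ?_, ?_, ?_, ?_, ?_, ?_, ?_⟩
    · positivity
    · have : (k : ℝ) < s := by nlinarith
      intro h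
      have : (k : ℝ) - s = 0 := by linarith [div_eq_zero_iff.mp h]
      linarith
    · have : (0 : ℝ) < s := hspos
      intro h
      nlinarith [h]
    · linear_combination (1 / 4 : ℝ) * hs
    · linear_combination (1 / 4 : ℝ) * hs
    · nlinarith [hs, hspos, hk1]
    · linear_combination (-(1 / 4) : ℝ) * hs
  have hB := HankelAux.binet hF0 hF1 hFrec φ ψ hφ0 hψ0 hq1 hq2
  -- the exponential basis
  set μ : Fin (n + 1) → ℝ := fun a => φ ^ (a : ℕ) * ψ ^ (n - (a : ℕ)) with hμdef
  have hμ0 : ∀ a, μ a ≠ 0 := by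
    intro a
    exact mul_ne_zero (pow_ne_zero _ hφ0) (pow_ne_zero _ hψ0)
  have hφpos : 0 < φ := by linarith
  have hψneg : ψ < 0 := by nlinarith
  have hφβ : φ * |ψ| = 1 := by
    rw [abs_of_neg hψneg]
    linarith [hφψ]
  have hμinj : Function.Injective μ := by
    intro a b hab
    have habs := congrArg abs hab
    simp only [hμdef, abs_mul, abs_pow] at habs
    rw [abs_of_pos hφpos] at habs
    have e : ∀ c : Fin (n + 1), φ ^ n * (φ ^ (c : ℕ) * |ψ| ^ (n - (c : ℕ)))
        = φ ^ (2 * (c : ℕ)) := by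
      intro c
      have hc : (c : ℕ) ≤ n := by omega
      have h1 : φ ^ n = φ ^ (c : ℕ) * φ ^ (n - (c : ℕ)) := by
        rw [← pow_add]
        congr 1
        omega
      calc φ ^ n * (φ ^ (c : ℕ) * |ψ| ^ (n - (c : ℕ)))
          = φ ^ (c : ℕ) * φ ^ (c : ℕ) * (φ ^ (n - (c : ℕ)) * |ψ| ^ (n - (c : ℕ))) := by
            rw [h1]; ring
        _ = φ ^ (c : ℕ) * φ ^ (c : ℕ) * (φ * |ψ|) ^ (n - (c : ℕ)) := by rw [mul_pow]
        _ = φ ^ (2 * (c : ℕ)) := by rw [hφβ, one_pow, two_mul, pow_add, mul_one]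
    have h2 : φ ^ (2 * (a : ℕ)) = φ ^ (2 * (b : ℕ)) := by
      rw [← e a, ← e b, habs]
    have h3 : 2 * (a : ℕ) = 2 * (b : ℕ) := by
      by_contra hne
      rcases Nat.lt_or_ge (2 * (a : ℕ)) (2 * (b : ℕ)) with hlt | hge
      · have := pow_lt_pow_right₀ hφ1 hlt
        linarith [h2]
      · have hlt2 : 2 * (b : ℕ) < 2 * (a : ℕ) := by omega
        have := pow_lt_pow_right₀ hφ1 hlt2
        linarith [h2]
    exact Fin.ext (by omega)
  -- nonvanishing of the integer quantities
  have hQi_ne : ∀ i : ℕ, i < n + 1 → HankelAux.QiZ F n i ≠ 0 := by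
    intro i hi
    rw [HankelAux.QiZ]
    apply Finset.prod_ne_zero_iff.mpr
    intro t ht
    rw [Finset.mem_erase, Finset.mem_range] at ht
    apply hFne0
    omega
  have hR_ne : ∀ m : ℕ, m < n + 1 → HankelAux.RZ F n m ≠ 0 := by
    intro m hm
    rw [HankelAux.RZ]
    apply Finset.prod_ne_zero_iff.mpr
    intro t ht
    rw [Finset.mem_erase, Finset.mem_range] at ht
    apply hFne0
    omega
  have hPZcast : ∀ i : Fin (n + 1),
      ((HankelAux.PZ F α n (i : ℕ) : ℤ) : ℝ)
        = ∏ t ∈ Finset.range (n + 1), ((F (α + (t : ℤ) + ((i : ℕ) : ℤ)) : ℤ) : ℝ) := by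
    intro i; rw [HankelAux.PZ]; push_cast; rfl
  -- candidate inverse over ℝ
  set Br : Matrix (Fin (n + 1)) (Fin (n + 1)) ℝ := fun i m =>
    ((HankelAux.PZ F α n (i : ℕ) * HankelAux.QZ F α n (i : ℕ) (m : ℕ) : ℤ) : ℝ)
      / ((HankelAux.QiZ F n (i : ℕ) * HankelAux.RZ F n (m : ℕ) : ℤ) : ℝ) with hBrdef
  -- span representations
  have hcard : ∀ x : ℕ, x < n + 1 → ((Finset.range (n + 1)).erase x).card = n := by
    intro x hx
    rw [Finset.card_erase_of_mem (Finset.mem_range.mpr hx), Finset.card_range]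
    omega
  have hspanA : ∀ m : Fin (n + 1), ∃ d : ℕ → ℝ, ∀ j : ℤ,
      (∏ t ∈ (Finset.range (n + 1)).erase (m : ℕ), ((F (α + (t : ℤ) + j) : ℤ) : ℝ))
        = ∑ a ∈ Finset.range (n + 1), d a * (φ ^ a * ψ ^ (n - a)) ^ j := by
    intro m
    obtain ⟨d, hd⟩ := HankelAux.span_prod φ ψ hφ0 hψ0 hsub hB
      ((Finset.range (n + 1)).erase (m : ℕ)) (fun t => α + (t : ℤ))
    rw [hcard (m : ℕ) m.isLt] at hd
    exact ⟨d, hd⟩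
  have hspanH : ∀ i : Fin (n + 1), ∃ d : ℕ → ℝ, ∀ j : ℤ,
      (∏ t ∈ (Finset.range (n + 1)).erase (i : ℕ), ((F (-(t : ℤ) + j) : ℤ) : ℝ))
        = ∑ a ∈ Finset.range (n + 1), d a * (φ ^ a * ψ ^ (n - a)) ^ j := by
    intro i
    obtain ⟨d, hd⟩ := HankelAux.span_prod φ ψ hφ0 hψ0 hsub hB
      ((Finset.range (n + 1)).erase (i : ℕ)) (fun t => -(t : ℤ))
    rw [hcard (i : ℕ) i.isLt] at hd
    exact ⟨d, hd⟩
  -- main summation identity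
  have hkey : ∀ i j : Fin (n + 1),
      (∑ m : Fin (n + 1), Br i m * (1 / ((F (α + ((m : ℕ) : ℤ) + ((j : ℕ) : ℤ)) : ℤ) : ℝ)))
        = if i = j then 1 else 0 := by
    intro i j
    choose D hD using hspanA
    obtain ⟨E, hE⟩ := hspanH i
    set PiR : ℝ := ((HankelAux.PZ F α n (i : ℕ) : ℤ) : ℝ) with hPiR
    set QiR : ℝ := ((HankelAux.QiZ F n (i : ℕ) : ℤ) : ℝ) with hQiR
    have hQiR0 : QiR ≠ 0 := Int.cast_ne_zero.mpr (hQi_ne _ i.isLt)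
    set dtot : ℕ → ℝ := fun a =>
      (∑ m : Fin (n + 1), Br i m * D m a) - (PiR / QiR) * E a with hdtot
    have hrep : ∀ jz : ℤ,
        (∑ m : Fin (n + 1), Br i m *
            ∏ t ∈ (Finset.range (n + 1)).erase (m : ℕ), ((F (α + (t : ℤ) + jz) : ℤ) : ℝ))
          - (PiR / QiR) *
            (∏ t ∈ (Finset.range (n + 1)).erase (i : ℕ), ((F (-(t : ℤ) + jz) : ℤ) : ℝ))
        = ∑ a ∈ Finset.range (n + 1), dtot a * (φ ^ a * ψ ^ (n - a)) ^ jz := by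
      intro jz
      rw [hE jz]
      have h1 : (∑ m : Fin (n + 1), Br i m *
            ∏ t ∈ (Finset.range (n + 1)).erase (m : ℕ), ((F (α + (t : ℤ) + jz) : ℤ) : ℝ))
          = ∑ m : Fin (n + 1), ∑ a ∈ Finset.range (n + 1),
              Br i m * (D m a * (φ ^ a * ψ ^ (n - a)) ^ jz) := by
        apply Finset.sum_congr rfl
        intro m _
        rw [hD m jz, Finset.mul_sum]
      rw [h1, Finset.sum_comm, Finset.mul_sum, ← Finset.sum_sub_distrib]
      apply Finset.sum_congr rfl
      intro a _
      simp only [hdtot]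
      rw [sub_mul, Finset.sum_mul]
      congr 1
      · apply Finset.sum_congr rfl; intro m _; ring
      · ring
    have hvanish : ∀ m0 : Fin (n + 1),
        (∑ m : Fin (n + 1), Br i m *
            ∏ t ∈ (Finset.range (n + 1)).erase (m : ℕ),
              ((F (α + (t : ℤ) + (-α - ((m0 : ℕ) : ℤ))) : ℤ) : ℝ))
          - (PiR / QiR) *
            (∏ t ∈ (Finset.range (n + 1)).erase (i : ℕ),
              ((F (-(t : ℤ) + (-α - ((m0 : ℕ) : ℤ))) : ℤ) : ℝ)) = 0 := by
      intro m0
      have hsum : (∑ m : Fin (n + 1), Br i m *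
            ∏ t ∈ (Finset.range (n + 1)).erase (m : ℕ),
              ((F (α + (t : ℤ) + (-α - ((m0 : ℕ) : ℤ))) : ℤ) : ℝ))
          = Br i m0 * ((HankelAux.RZ F n (m0 : ℕ) : ℤ) : ℝ) := by
        rw [Finset.sum_eq_single m0]
        · congr 1
          rw [HankelAux.RZ]
          push_cast
          apply Finset.prod_congr rfl
          intro t _
          congr 2
          ring
        · intro m _ hm
          have hmem : (m0 : ℕ) ∈ (Finset.range (n + 1)).erase (m : ℕ) := by
            apply Finset.mem_erase.mpr
            refine ⟨?_, Finset.mem_range.mpr m0.isLt⟩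
            intro h
            exact hm (Fin.ext h).symm
          apply mul_eq_zero_of_right
          apply Finset.prod_eq_zero hmem
          rw [show α + ((m0 : ℕ) : ℤ) + (-α - ((m0 : ℕ) : ℤ)) = 0 by ring, hF0]
          norm_num
        · intro h
          exact absurd (Finset.mem_univ m0) h
      rw [hsum]
      have hH : (∏ t ∈ (Finset.range (n + 1)).erase (i : ℕ),
            ((F (-(t : ℤ) + (-α - ((m0 : ℕ) : ℤ))) : ℤ) : ℝ))
          = ((HankelAux.QZ F α n (i : ℕ) (m0 : ℕ) : ℤ) : ℝ) := by
        rw [HankelAux.QZ]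
        push_cast
        apply Finset.prod_congr rfl
        intro t _
        congr 2
        ring
      rw [hH]
      simp only [hBrdef]
      have hR0 : ((HankelAux.RZ F n (m0 : ℕ) : ℤ) : ℝ) ≠ 0 :=
        Int.cast_ne_zero.mpr (hR_ne _ m0.isLt)
      rw [hPiR, hQiR]
      push_cast
      field_simp
      ring
    have hcoef : ∀ a ∈ Finset.range (n + 1), dtot a = 0 := by
      have hvan : ∀ t : Fin (n + 1),
          ∑ a : Fin (n + 1), (fun a : Fin (n + 1) => dtot (a : ℕ)) a
            * μ a ^ ((-α - (n : ℤ)) + ((t : ℕ) : ℤ)) = 0 := by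
        intro t
        have hm0lt : n - (t : ℕ) < n + 1 := by omega
        set m0 : Fin (n + 1) := ⟨n - (t : ℕ), hm0lt⟩ with hm0
        have hjz : (-α - (n : ℤ)) + ((t : ℕ) : ℤ) = -α - ((m0 : ℕ) : ℤ) := by
          simp only [hm0]
          omega
        rw [hjz]
        have hfin : (∑ a : Fin (n + 1), (fun a : Fin (n + 1) => dtot (a : ℕ)) a
              * μ a ^ (-α - ((m0 : ℕ) : ℤ)))
            = ∑ a ∈ Finset.range (n + 1),
              dtot a * (φ ^ a * ψ ^ (n - a)) ^ (-α - ((m0 : ℕ) : ℤ)) := by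
          rw [← Fin.sum_univ_eq_sum_range
            (fun c => dtot c * (φ ^ c * ψ ^ (n - c)) ^ (-α - ((m0 : ℕ) : ℤ))) (n + 1)]
        rw [hfin, ← hrep _]
        exact hvanish m0
      have hexp := HankelAux.exp_unique n μ hμ0 hμinj
        (fun a : Fin (n + 1) => dtot (a : ℕ)) (-α - (n : ℤ)) hvan
      intro a ha
      exact hexp ⟨a, Finset.mem_range.mp ha⟩
    have hgzero : ∀ jz : ℤ,
        (∑ m : Fin (n + 1), Br i m *
            ∏ t ∈ (Finset.range (n + 1)).erase (m : ℕ), ((F (α + (t : ℤ) + jz) : ℤ) : ℝ))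
          = (PiR / QiR) *
            (∏ t ∈ (Finset.range (n + 1)).erase (i : ℕ), ((F (-(t : ℤ) + jz) : ℤ) : ℝ)) := by
      intro jz
      have h := hrep jz
      have h2 : (∑ a ∈ Finset.range (n + 1), dtot a * (φ ^ a * ψ ^ (n - a)) ^ jz) = 0 := by
        apply Finset.sum_eq_zero
        intro a ha
        rw [hcoef a ha, zero_mul]
      rw [h2] at h
      linarith [h]
    have hj := hgzero ((j : ℕ) : ℤ)
    set PJ : ℝ := ∏ t ∈ Finset.range (n + 1),
        ((F (α + (t : ℤ) + ((j : ℕ) : ℤ)) : ℤ) : ℝ) with hPJ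
    have hFmj : ∀ m : Fin (n + 1), ((F (α + ((m : ℕ) : ℤ) + ((j : ℕ) : ℤ)) : ℤ) : ℝ) ≠ 0 := by
      intro m
      apply Int.cast_ne_zero.mpr
      apply hFne0
      omega
    have hPJf : ∀ m : Fin (n + 1),
        ((F (α + ((m : ℕ) : ℤ) + ((j : ℕ) : ℤ)) : ℤ) : ℝ) *
          (∏ t ∈ (Finset.range (n + 1)).erase (m : ℕ),
            ((F (α + (t : ℤ) + ((j : ℕ) : ℤ)) : ℤ) : ℝ)) = PJ := by
      intro m
      rw [hPJ]
      exact Finset.mul_prod_erase (Finset.range (n + 1))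
        (fun t => ((F (α + (t : ℤ) + ((j : ℕ) : ℤ)) : ℤ) : ℝ)) (Finset.mem_range.mpr m.isLt)
    have hPJ0 : PJ ≠ 0 := by
      rw [hPJ]
      apply Finset.prod_ne_zero_iff.mpr
      intro t ht
      rw [Finset.mem_range] at ht
      apply Int.cast_ne_zero.mpr
      apply hFne0
      omega
    have hfinal : (∑ m : Fin (n + 1), Br i m *
          (1 / ((F (α + ((m : ℕ) : ℤ) + ((j : ℕ) : ℤ)) : ℤ) : ℝ))) * PJ
        = (PiR / QiR) *
          (∏ t ∈ (Finset.range (n + 1)).erase (i : ℕ),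
            ((F (-(t : ℤ) + ((j : ℕ) : ℤ)) : ℤ) : ℝ)) := by
      rw [Finset.sum_mul, ← hj]
      apply Finset.sum_congr rfl
      intro m _
      rw [← hPJf m]
      have hne := hFmj m
      field_simp
    by_cases hij : i = j
    · subst hij
      rw [if_pos rfl]
      have hHQ : (∏ t ∈ (Finset.range (n + 1)).erase (i : ℕ),
            ((F (-(t : ℤ) + ((i : ℕ) : ℤ)) : ℤ) : ℝ)) = QiR := by
        rw [hQiR, HankelAux.QiZ]
        push_cast
        apply Finset.prod_congr rfl
        intro t _
        congr 2
        ring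
      have hPJP : PJ = PiR := by
        rw [hPJ, hPiR, HankelAux.PZ]
        push_cast
        rfl
      rw [hHQ, div_mul_cancel₀ _ hQiR0, hPJP] at hfinal
      have hPiR0 : PiR ≠ 0 := by
        rw [hPiR, HankelAux.PZ]
        apply Int.cast_ne_zero.mpr
        apply Finset.prod_ne_zero_iff.mpr
        intro t ht
        rw [Finset.mem_range] at ht
        apply hFne0
        omega
      have := mul_right_cancel₀ hPiR0 (hfinal.trans (one_mul PiR).symm)
      exact this
    · rw [if_neg hij]
      have hH0 : (∏ t ∈ (Finset.range (n + 1)).erase (i : ℕ),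
            ((F (-(t : ℤ) + ((j : ℕ) : ℤ)) : ℤ) : ℝ)) = 0 := by
        have hmem : (j : ℕ) ∈ (Finset.range (n + 1)).erase (i : ℕ) := by
          apply Finset.mem_erase.mpr
          refine ⟨?_, Finset.mem_range.mpr j.isLt⟩
          intro h
          exact hij (Fin.ext h).symm
        apply Finset.prod_eq_zero hmem
        rw [show -(((j : ℕ) : ℤ)) + ((j : ℕ) : ℤ) = 0 by ring, hF0]
        norm_num
      rw [hH0, mul_zero] at hfinal
      exact (mul_eq_zero.mp hfinal).resolve_right hPJ0

  -- matrix identity over ℝ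
  have hmul : Br * A.map (⇑(Rat.castHom ℝ)) = 1 := by
    ext i j
    rw [Matrix.mul_apply, Matrix.one_apply]
    have hentry : ∀ m : Fin (n + 1), A.map (⇑(Rat.castHom ℝ)) m j
        = 1 / ((F (α + ((m : ℕ) : ℤ) + ((j : ℕ) : ℤ)) : ℤ) : ℝ) := by
      intro m
      rw [Matrix.map_apply, hA m j, map_div₀, map_one, map_intCast]
    rw [Finset.sum_congr rfl (fun m _ => by rw [hentry m])]
    exact hkey i j
  -- determinant and unit
  have hdetA : A.det ≠ 0 := by
    intro h0
    have h1 := congrArg Matrix.det hmul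
    have h2 : (A.map (⇑(Rat.castHom ℝ))).det = (Rat.castHom ℝ) A.det := by
      rw [RingHom.map_det, RingHom.mapMatrix_apply]
    rw [Matrix.det_mul, Matrix.det_one, h2, h0, map_zero, mul_zero] at h1
    exact zero_ne_one h1
  have hUnit : IsUnit A := by
    apply (Matrix.isUnit_iff_isUnit_det A).mpr
    exact isUnit_iff_ne_zero.mpr hdetA
  refine ⟨hUnit, ?_⟩
  -- the integer matrix
  refine ⟨fun i m => (HankelAux.PZ F α n (i : ℕ) * HankelAux.QZ F α n (i : ℕ) (m : ℕ))
      / (HankelAux.QiZ F n (i : ℕ) * HankelAux.RZ F n (m : ℕ)), ?_⟩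
  have hBint : ∀ (i m : Fin (n + 1)), Br i m
      = (((HankelAux.PZ F α n (i : ℕ) * HankelAux.QZ F α n (i : ℕ) (m : ℕ))
        / (HankelAux.QiZ F n (i : ℕ) * HankelAux.RZ F n (m : ℕ)) : ℤ) : ℝ) := by
    intro i m
    obtain ⟨c, hc⟩ := HankelAux.dvd_main hF0 hF1 hFrec hk α hα n (i : ℕ) (m : ℕ) i.isLt m.isLt
    have hden : HankelAux.QiZ F n (i : ℕ) * HankelAux.RZ F n (m : ℕ) ≠ 0 :=
      mul_ne_zero (hQi_ne _ i.isLt) (hR_ne _ m.isLt)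
    simp only [hBrdef]
    rw [hc, Int.mul_ediv_cancel_left _ hden]
    push_cast
    have h1 : ((HankelAux.QiZ F n (i : ℕ) : ℤ) : ℝ) ≠ 0 := Int.cast_ne_zero.mpr (hQi_ne _ i.isLt)
    have h2 : ((HankelAux.RZ F n (m : ℕ) : ℤ) : ℝ) ≠ 0 := Int.cast_ne_zero.mpr (hR_ne _ m.isLt)
    field_simp
  have hinv1 : (A.map (⇑(Rat.castHom ℝ)))⁻¹ = Br := Matrix.inv_eq_left_inv hmul
  have hinv2 : (A.map (⇑(Rat.castHom ℝ)))⁻¹ = (A⁻¹).map (⇑(Rat.castHom ℝ)) := by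
    apply Matrix.inv_eq_left_inv
    rw [← Matrix.map_mul, Matrix.nonsing_inv_mul A (isUnit_iff_ne_zero.mpr hdetA)]
    exact Matrix.map_one _ (map_zero _) (map_one _)
  ext i m
  have hreal : ((A⁻¹ i m : ℚ) : ℝ)
      = (((HankelAux.PZ F α n (i : ℕ) * HankelAux.QZ F α n (i : ℕ) (m : ℕ))
        / (HankelAux.QiZ F n (i : ℕ) * HankelAux.RZ F n (m : ℕ)) : ℤ) : ℝ) := by
    have h := congrFun (congrFun (hinv2.symm.trans hinv1) i) m
    rw [Matrix.map_apply] at h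
    rw [← hBint i m]
    rw [← h]
    simp
  change A⁻¹ i m = (((HankelAux.PZ F α n (i : ℕ) * HankelAux.QZ F α n (i : ℕ) (m : ℕ))
        / (HankelAux.QiZ F n (i : ℕ) * HankelAux.RZ F n (m : ℕ)) : ℤ) : ℚ)
  apply Rat.cast_injective (α := ℝ)
  rw [hreal]
  push_cast
  ring
end

section
/- For all integers α, n, i, j, the generalized Fibonacci numbers satisfy F_{α+n+i} · F_{α+n+j} − (−1)^{α+i+j} · F_{n−i} · F_{n−j} = F_{α+2n} · F_{α+i+j}. -/
theorem gen_fib_identity (k : ℤ) (hk : 1 ≤ k) (F : ℤ → ℤ)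
    (hF0 : F 0 = 0) (hF1 : F 1 = 1)
    (hFrec : ∀ n : ℤ, F (n + 1) = k * F n + F (n - 1)) :
    ∀ α n i j : ℤ,
      F (α + n + i) * F (α + n + j) -
          ((α + i + j).negOnePow : ℤ) * (F (n - i) * F (n - j)) =
        F (α + 2 * n) * F (α + i + j) := by
  have hFneg1 : F (-1) = 1 := by
    have h := hFrec 0
    rw [show (0:ℤ) + 1 = 1 from by ring, show (0:ℤ) - 1 = -1 from by ring, hF0, hF1] at h
    linarith
  have hrec' : ∀ n : ℤ, F (n - 1) = F (n + 1) - k * F n := by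
    intro n; have := hFrec n; linarith
  -- addition formula
  have key : ∀ m : ℤ, ∀ n : ℤ,
      F (m + n) = F m * F (n + 1) + F (m - 1) * F n ∧
      F (m + 1 + n) = F (m + 1) * F (n + 1) + F m * F n := by
    intro m
    induction m using Int.induction_on with
    | zero =>
      intro n
      constructor
      · rw [show (0:ℤ) + n = n from by ring, show (0:ℤ) - 1 = -1 from by ring, hF0, hFneg1]
        ring
      · rw [show (0:ℤ) + 1 + n = n + 1 from by ring, show (0:ℤ) + 1 = 1 from by ring, hF0, hF1]
        ring
    | succ i ih =>
      intro n
      obtain ⟨h1, h2⟩ := ih n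
      constructor
      · rw [show ((i:ℤ) + 1 - 1) = (i:ℤ) from by ring]; exact h2
      · rw [show ((i:ℤ) + 1 + 1 + n) = ((i:ℤ) + 1 + n) + 1 from by ring, hFrec ((i:ℤ) + 1 + n),
            show ((i:ℤ) + 1 + n - 1) = (i:ℤ) + n from by ring, h1, h2]
        have e2 : F ((i:ℤ) + 1 + 1) = k * F ((i:ℤ) + 1) + F (i:ℤ) := by
          have := hFrec ((i:ℤ) + 1)
          rw [show ((i:ℤ) + 1 - 1) = (i:ℤ) from by ring] at this
          exact this
        rw [e2]
        have r : F ((i:ℤ) + 1) = k * F (i:ℤ) + F ((i:ℤ) - 1) := hFrec (i:ℤ)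
        linear_combination -(F n) * r
    | pred i ih =>
      intro n
      obtain ⟨h1, h2⟩ := ih n
      constructor
      · rw [show (-(i:ℤ) - 1 + n) = (-(i:ℤ) + n) - 1 from by ring, hrec' (-(i:ℤ) + n),
            show (-(i:ℤ) + n + 1) = (-(i:ℤ) + 1 + n) from by ring, h1, h2]
        have e2 : F (-(i:ℤ) - 1) = F (-(i:ℤ) + 1) - k * F (-(i:ℤ)) := by
          have := hrec' (-(i:ℤ))
          rw [show (-(i:ℤ) - 1) = (-(i:ℤ)) - 1 from by ring] at this
          exact this
        have e3 : F (-(i:ℤ) - 1 - 1) = F (-(i:ℤ)) - k * F (-(i:ℤ) - 1) := by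
          have := hrec' (-(i:ℤ) - 1)
          rw [show (-(i:ℤ) - 1 + 1) = -(i:ℤ) from by ring] at this
          exact this
        rw [e3, e2]
        ring
      · rw [show (-(i:ℤ) - 1 + 1 + n) = -(i:ℤ) + n from by ring,
            show (-(i:ℤ) - 1 + 1) = -(i:ℤ) from by ring, h1,
            show (-(i:ℤ) - 1) = -(i:ℤ) - 1 from rfl]
  have add : ∀ m n : ℤ, F (m + n) = F m * F (n + 1) + F (m - 1) * F n :=
    fun m n => (key m n).1
  -- Cassini
  have cas : ∀ n : ℤ, F (n + 1) ^ 2 - k * F (n + 1) * F n - F n ^ 2 = (n.negOnePow : ℤ) := by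
    intro n
    induction n using Int.induction_on with
    | zero =>
      rw [show (0:ℤ) + 1 = 1 from by ring, hF0, hF1]
      norm_num
    | succ i ih =>
      have e : F ((i:ℤ) + 1 + 1) = k * F ((i:ℤ) + 1) + F (i:ℤ) := by
        have := hFrec ((i:ℤ) + 1)
        rw [show ((i:ℤ) + 1 - 1) = (i:ℤ) from by ring] at this
        exact this
      rw [e, Int.negOnePow_succ, Units.val_neg]
      linear_combination -ih
    | pred i ih =>
      have hn1 : ((-(i:ℤ) - 1).negOnePow : ℤ) = -((-(i:ℤ)).negOnePow : ℤ) := by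
        have h := Int.negOnePow_succ (-(i:ℤ) - 1)
        rw [show (-(i:ℤ) - 1 + 1) = -(i:ℤ) from by ring] at h
        rw [h, Units.val_neg]
        ring
      have e2 : F (-(i:ℤ) + 1) = k * F (-(i:ℤ)) + F (-(i:ℤ) - 1) := hFrec (-(i:ℤ))
      rw [show (-(i:ℤ) - 1 + 1) = -(i:ℤ) from by ring, hn1]
      linear_combination -ih + (F (-(i:ℤ) + 1) + F (-(i:ℤ) - 1)) * e2
  -- Negation formula
  have negnat : ∀ m : ℕ, F (-(m:ℤ)) = -((m:ℤ).negOnePow : ℤ) * F (m:ℤ) ∧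
      F (-((m:ℤ) + 1)) = -(((m:ℤ) + 1).negOnePow : ℤ) * F ((m:ℤ) + 1) := by
    intro m
    induction m with
    | zero => simp [hF0, hF1, hFneg1]
    | succ m ih =>
      obtain ⟨h1, h2⟩ := ih
      push_cast
      constructor
      · convert h2 using 2 <;> push_cast <;> ring
      · have e : F (-((m:ℤ) + 1) - 1) = F (-((m:ℤ) + 1) + 1) - k * F (-((m:ℤ) + 1)) := by
          have := hrec' (-((m:ℤ) + 1))
          exact this
        rw [show (-((m:ℤ) + 1 + 1)) = -((m:ℤ) + 1) - 1 from by ring, e,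
            show (-((m:ℤ) + 1) + 1) = -(m:ℤ) from by ring, h1, h2]
        have e2 : F ((m:ℤ) + 1 + 1) = k * F ((m:ℤ) + 1) + F (m:ℤ) := by
          have := hFrec ((m:ℤ) + 1)
          rw [show ((m:ℤ) + 1 - 1) = (m:ℤ) from by ring] at this
          exact this
        rw [e2]
        have s1 : (((m:ℤ) + 1 + 1).negOnePow : ℤ) = ((m:ℤ).negOnePow : ℤ) := by
          rw [Int.negOnePow_succ, Int.negOnePow_succ]
          push_cast; ring
        have s2 : (((m:ℤ) + 1).negOnePow : ℤ) = -((m:ℤ).negOnePow : ℤ) := by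
          rw [Int.negOnePow_succ]; push_cast; ring
        rw [s1, s2]
        ring
  have neg : ∀ n : ℤ, F (-n) = -((n).negOnePow : ℤ) * F n := by
    intro n
    rcases le_or_gt 0 n with h | h
    · obtain ⟨m, rfl⟩ := Int.eq_ofNat_of_zero_le h
      exact (negnat m).1
    · obtain ⟨m, rfl⟩ : ∃ m : ℕ, n = -(m:ℤ) := by
        refine ⟨n.natAbs, ?_⟩
        omega
      have := (negnat m).1
      have sq : ((m:ℤ).negOnePow : ℤ) * ((m:ℤ).negOnePow : ℤ) = 1 := by
        rw [← Units.val_mul, Int.units_mul_self, Units.val_one]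
      rw [neg_neg, Int.negOnePow_neg, this]
      linear_combination (-F (m:ℤ)) * sq
  -- Vajda's identity
  have vajda : ∀ n i j : ℤ, F (n + i) * F (n + j) - F n * F (n + i + j) =
      (n.negOnePow : ℤ) * (F i * F j) := by
    intro n i j
    have hi : F (n + i) = F i * F (n + 1) + F (i - 1) * F n := by
      rw [show n + i = i + n from by ring]; exact add i n
    have hj : F (n + j) = F j * F (n + 1) + F (j - 1) * F n := by
      rw [show n + j = j + n from by ring]; exact add j n
    have hij : F (n + i + j) = F (i + j) * F (n + 1) + F (i + j - 1) * F n := by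
      rw [show n + i + j = (i + j) + n from by ring]; exact add (i + j) n
    have hij2 : F (i + j) = F i * F (j + 1) + F (i - 1) * F j := add i j
    have hij3 : F (i + j - 1) = F i * F j + F (i - 1) * F (j - 1) := by
      have := add i (j - 1)
      rw [show i + (j - 1) = i + j - 1 from by ring,
          show (j - 1 + 1) = j from by ring] at this
      exact this
    have hj1 : F (j + 1) = k * F j + F (j - 1) := hFrec j
    have c := cas n
    rw [hi, hj, hij, hij2, hij3, hj1]
    linear_combination (F i * F j) * c
  -- Main proof
  intro α n i j
  have v := vajda (α + 2 * n) (i - n) (j - n)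
  rw [show α + 2 * n + (i - n) = α + n + i from by ring,
      show α + 2 * n + (j - n) = α + n + j from by ring,
      show α + n + i + (j - n) = α + i + j from by ring] at v
  have ni : F (i - n) = -(((n - i)).negOnePow : ℤ) * F (n - i) := by
    have := neg (n - i)
    rw [show -(n - i) = i - n from by ring] at this
    exact this
  have nj : F (j - n) = -(((n - j)).negOnePow : ℤ) * F (n - j) := by
    have := neg (n - j)
    rw [show -(n - j) = j - n from by ring] at this
    exact this
  rw [ni, nj] at v
  have sgn : ((α + 2 * n).negOnePow : ℤ) * (((n - i).negOnePow : ℤ) * ((n - j).negOnePow : ℤ)) =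
      ((α + i + j).negOnePow : ℤ) := by
    rw [← Units.val_mul, ← Units.val_mul, ← Int.negOnePow_add, ← Int.negOnePow_add]
    congr 1
    rw [show α + 2 * n + (n - i + (n - j)) = (α + i + j) + 2 * (2 * n - i - j) from by ring,
        Int.negOnePow_add, Int.negOnePow_two_mul, mul_one]
  linear_combination v + (F (n - i) * F (n - j)) * sgn
end

section
/- For all integers n, i, j, the generalized Lucas and Fibonacci numbers satisfy L_{n+i} · L_{n+j} − L_n · L_{n+i+j} = (−1)^{n+1} · (k² + 4) · F_i · F_j. -/
theorem gen_lucas_product_identity (k : ℤ) (hk : 1 ≤ k)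
    (F : ℤ → ℤ) (hF0 : F 0 = 0) (hF1 : F 1 = 1)
    (hFrec : ∀ n : ℤ, F (n + 1) = k * F n + F (n - 1))
    (L : ℤ → ℤ) (hL0 : L 0 = 2) (hL1 : L 1 = k)
    (hLrec : ∀ n : ℤ, L (n + 1) = k * L n + L (n - 1)) :
    ∀ n i j : ℤ,
      L (n + i) * L (n + j) - L n * L (n + i + j) =
        ((n + 1).negOnePow : ℤ) * ((k ^ 2 + 4) * (F i * F j)) := by
  have hsgn : ∀ m : ℤ, ((m + 1).negOnePow : ℤ) = -(m.negOnePow : ℤ) := by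
    intro m; rw [Int.negOnePow_succ]; push_cast; ring
  have hL2 : ∀ m : ℤ, L (m + 1 + 1) = k * L (m + 1) + L m := by
    intro m
    have := hLrec (m + 1)
    rw [add_sub_cancel_right] at this
    exact this
  -- uniqueness: a solution of the recurrence vanishing at 0 and 1 vanishes everywhere
  have uniq : ∀ D : ℤ → ℤ, (∀ m : ℤ, D (m + 1) = k * D m + D (m - 1)) →
      D 0 = 0 → D 1 = 0 → ∀ m : ℤ, D m = 0 := by
    intro D hrec h0 h1 m
    have key : ∀ m : ℤ, D m = 0 ∧ D (m + 1) = 0 := by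
      intro m
      induction m using Int.induction_on with
      | zero => exact ⟨h0, h1⟩
      | succ i ih =>
        refine ⟨ih.2, ?_⟩
        have h := hrec ((i : ℤ) + 1)
        rw [add_sub_cancel_right] at h
        rw [h, ih.1, ih.2]; ring
      | pred i ih =>
        constructor
        · have h := hrec (-(i : ℤ))
          rw [ih.1, ih.2] at h
          linarith
        · have e : (-(i : ℤ) - 1 + 1) = -(i : ℤ) := by ring
          rw [e]; exact ih.1
    exact (key m).1
  -- Lemma A : L(n+1)^2 - L n * L(n+2) = (-1)^(n+1) (k^2+4)
  have lemA : ∀ n : ℤ, L (n + 1) ^ 2 - L n * L (n + 1 + 1) =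
      ((n + 1).negOnePow : ℤ) * (k ^ 2 + 4) := by
    intro n
    induction n using Int.induction_on with
    | zero =>
      have h := hL2 0
      norm_num at h ⊢
      rw [h, hL0, hL1]
      ring
    | succ i ih =>
      have h1 := hL2 (i : ℤ)
      have h2 := hL2 ((i : ℤ) + 1)
      rw [hsgn ((i : ℤ) + 1), h2, h1]
      rw [h1] at ih
      linear_combination -ih
    | pred i ih =>
      have hr : L (-(i : ℤ) + 1) = k * L (-(i : ℤ)) + L (-(i : ℤ) - 1) := hLrec (-(i : ℤ))
      have h2 := hL2 (-(i : ℤ))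
      rw [h2] at ih
      have e1 : -(i : ℤ) - 1 + 1 = -(i : ℤ) := by ring
      have e2 : -(i : ℤ) - 1 + 1 + 1 = -(i : ℤ) + 1 := by ring
      rw [e2, e1]
      have sgn : ((-(i : ℤ)).negOnePow : ℤ) = -((-(i : ℤ) + 1).negOnePow : ℤ) := by
        rw [hsgn (-(i : ℤ))]; ring
      rw [sgn]
      linear_combination -ih + L (-(i : ℤ) + 1) * hr
  -- Lemma B : L(n+i) L(n+1) - L n L(n+i+1) = (-1)^(n+1) (k^2+4) F i
  have lemB : ∀ n i : ℤ, L (n + i) * L (n + 1) - L n * L (n + i + 1) =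
      ((n + 1).negOnePow : ℤ) * ((k ^ 2 + 4) * F i) := by
    intro n i
    have := uniq (fun i => L (n + i) * L (n + 1) - L n * L (n + i + 1) -
        ((n + 1).negOnePow : ℤ) * ((k ^ 2 + 4) * F i)) ?_ ?_ ?_ i
    · linarith [this]
    · intro m
      beta_reduce
      have e1 : n + (m + 1) = (n + m) + 1 := by ring
      have e4 : n + (m - 1) + 1 = n + m := by ring
      have e3 : n + (m - 1) = (n + m) - 1 := by ring
      rw [e1, e4, e3]
      have hL1' : L (n + m + 1) = k * L (n + m) + L (n + m - 1) := hLrec (n + m)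
      have hL2' := hL2 (n + m)
      have hF' : F (m + 1) = k * F m + F (m - 1) := hFrec m
      linear_combination L (n + 1) * hL1' - L n * hL2' -
        ((n + 1).negOnePow : ℤ) * (k ^ 2 + 4) * hF'
    · beta_reduce
      rw [hF0, add_zero]
      ring
    · beta_reduce
      rw [hF1]
      linear_combination lemA n
  -- main theorem
  intro n i j
  have := uniq (fun j => L (n + i) * L (n + j) - L n * L (n + i + j) -
      ((n + 1).negOnePow : ℤ) * ((k ^ 2 + 4) * (F i * F j))) ?_ ?_ ?_ j
  · linarith [this]
  · intro m
    beta_reduce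
    have e1 : n + (m + 1) = (n + m) + 1 := by ring
    have e2 : n + i + (m + 1) = (n + i + m) + 1 := by ring
    have e3 : n + (m - 1) = (n + m) - 1 := by ring
    have e5 : n + i + (m - 1) = (n + i + m) - 1 := by ring
    rw [e1, e2, e3, e5]
    have hL1' : L (n + m + 1) = k * L (n + m) + L (n + m - 1) := hLrec (n + m)
    have hL2' : L (n + i + m + 1) = k * L (n + i + m) + L (n + i + m - 1) := hLrec (n + i + m)
    have hF' : F (m + 1) = k * F m + F (m - 1) := hFrec m
    linear_combination L (n + i) * hL1' - L n * hL2' -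
      ((n + 1).negOnePow : ℤ) * (k ^ 2 + 4) * F i * hF'
  · beta_reduce
    rw [hF0, add_zero, add_zero]
    ring
  · beta_reduce
    rw [hF1, mul_one]
    linear_combination lemB n i
end

section
/- For every integer n ≥ 1, F_{2n−1} divides F_{2n+1}² + k² and F_{2n+1} divides F_{2n−1}² + k²; that is, F_{2n+1}² ≡ −k² (mod F_{2n−1}) and F_{2n−1}² ≡ −k² (mod F_{2n+1}). -/
theorem gen_fib_congruence (k : ℤ) (hk : 1 ≤ k) (F : ℤ → ℤ)
    (hF0 : F 0 = 0) (hF1 : F 1 = 1)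
    (hFrec : ∀ n : ℤ, F (n + 1) = k * F n + F (n - 1)) :
    ∀ n : ℤ, 1 ≤ n →
      F (2 * n - 1) ∣ F (2 * n + 1) ^ 2 + k ^ 2 ∧
      F (2 * n + 1) ∣ F (2 * n - 1) ^ 2 + k ^ 2 := by
  have key : ∀ n : ℤ, 1 ≤ n → F (2*n-1) * F (2*n+1) = F (2*n) ^ 2 + 1 := by
    refine fun n hn =>
      Int.le_induction (motive := fun m _ => F (2*m-1) * F (2*m+1) = F (2*m) ^ 2 + 1) ?_ ?_ n hn
    · have h2 := hFrec 1
      have h3 := hFrec 2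
      norm_num at h2 h3 ⊢
      rw [hF0, hF1] at h2
      rw [h2, hF1] at h3
      rw [hF1, h3, h2]
      ring
    · intro n hn ih
      have r1 := hFrec (2*n)
      have r2 := hFrec (2*n+1)
      have r3 := hFrec (2*n+2)
      have e1 : (2*n+1+1 : ℤ) = 2*n+2 := by ring
      have e2 : (2*n+1-1 : ℤ) = 2*n := by ring
      have e3 : (2*n+2+1 : ℤ) = 2*n+3 := by ring
      have e4 : (2*n+2-1 : ℤ) = 2*n+1 := by ring
      rw [e1, e2] at r2
      rw [e3, e4] at r3
      have g1 : (2*(n+1)-1 : ℤ) = 2*n+1 := by ring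
      have g2 : (2*(n+1)+1 : ℤ) = 2*n+3 := by ring
      have g3 : (2*(n+1) : ℤ) = 2*n+2 := by ring
      rw [r1] at ih
      show F (2*(n+1)-1) * F (2*(n+1)+1) = F (2*(n+1)) ^ 2 + 1
      rw [g1, g2, g3, r3, r2, r1]
      linear_combination ih
  intro n hn
  have hkey := key n hn
  have r1 := hFrec (2*n)
  refine ⟨⟨k^2 * F (2*n+1) + 2*k * F (2*n) + F (2*n-1), ?_⟩,
    ⟨F (2*n+1) - 2*k * F (2*n) + k^2 * F (2*n-1), ?_⟩⟩
  · rw [r1] at hkey ⊢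
    linear_combination (-(k^2)) * hkey
  · rw [r1] at hkey ⊢
    linear_combination (-(k^2)) * hkey
end

section
/- For every integer m ≥ 1, arctan(k / F_{2m+1}) + arctan(1 / F_{2m+2}) = arctan(1 / F_{2m}), where arctan is the real inverse tangent function and the generalized Fibonacci numbers are regarded as real numbers. -/
theorem gen_fib_arctan (k : ℤ) (hk : 1 ≤ k) (F : ℤ → ℤ)
    (hF0 : F 0 = 0) (hF1 : F 1 = 1)
    (hFrec : ∀ n : ℤ, F (n + 1) = k * F n + F (n - 1)) :
    ∀ m : ℤ, 1 ≤ m →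
      Real.arctan ((k : ℝ) / (F (2 * m + 1) : ℝ)) +
          Real.arctan (1 / (F (2 * m + 2) : ℝ)) =
        Real.arctan (1 / (F (2 * m) : ℝ)) := by
  have hrec : ∀ n : ℤ, F (n + 2) = k * F (n + 1) + F n := by
    intro n
    have h := hFrec (n + 1)
    rwa [show n + 1 + 1 = n + 2 by ring, show n + 1 - 1 = n by ring] at h
  -- positivity
  have hpos : ∀ n : ℤ, 1 ≤ n → 1 ≤ F n ∧ 0 ≤ F (n - 1) := by
    refine Int.le_induction ?_ ?_
    · rw [show (1:ℤ) - 1 = 0 by ring, hF0, hF1]; exact ⟨le_refl 1, le_refl 0⟩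
    · intro n hn ih
      obtain ⟨h1, h2⟩ := ih
      constructor
      · have h := hFrec n
        nlinarith
      · rw [show n + 1 - 1 = n by ring]; linarith
  -- step for the determinant-like identity
  have hstep : ∀ n : ℤ, F (n+2) * F (n+3) - F (n+1) * F (n+4) =
      -(F (n+1) * F (n+2) - F n * F (n+3)) := by
    intro n
    have h1 := hrec n
    have h3 := hrec (n+2)
    rw [show n + 2 + 2 = n + 4 by ring, show n + 2 + 1 = n + 3 by ring] at h3
    linear_combination F (n+3) * h1 - F (n+1) * h3
  -- the key identity
  have hid : ∀ m : ℤ, 0 ≤ m →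
      F (2*m+1) * F (2*m+2) - F (2*m) * F (2*m+3) = k := by
    refine Int.le_induction ?_ ?_
    · have h2 := hrec 0
      norm_num at h2 ⊢
      rw [hF0, hF1, h2, hF0, hF1]
      ring
    · intro m hm ih
      have s1 := hstep (2*m)
      have s2 := hstep (2*m+1)
      rw [show 2*m+1+2 = 2*m+3 by ring, show 2*m+1+3 = 2*m+4 by ring,
        show 2*m+1+1 = 2*m+2 by ring, show 2*m+1+4 = 2*m+5 by ring] at s2
      rw [show 2*(m+1)+1 = 2*m+3 by ring, show 2*(m+1)+2 = 2*m+4 by ring,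
        show 2*(m+1)+3 = 2*m+5 by ring, show 2*(m+1) = 2*m+2 by ring]
      linarith [ih]
  intro m hm
  -- abbreviations and positivity facts
  have hA : 1 ≤ F (2*m) := (hpos (2*m) (by linarith)).1
  have hB : 1 ≤ F (2*m+1) := (hpos (2*m+1) (by linarith)).1
  have hC : 1 ≤ F (2*m+2) := (hpos (2*m+2) (by linarith)).1
  have hD : 1 ≤ F (2*m+3) := (hpos (2*m+3) (by linarith)).1
  have hIdm := hid m (by linarith)
  have hDrec := hrec (2*m+1)
  rw [show 2*m+1+2 = 2*m+3 by ring, show 2*m+1+1 = 2*m+2 by ring] at hDrec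
  set A : ℝ := (F (2*m) : ℝ) with hAdef
  set B : ℝ := (F (2*m+1) : ℝ) with hBdef
  set C : ℝ := (F (2*m+2) : ℝ) with hCdef
  set D : ℝ := (F (2*m+3) : ℝ) with hDdef
  have hAr : (1:ℝ) ≤ A := by rw [hAdef]; exact_mod_cast hA
  have hBr : (1:ℝ) ≤ B := by rw [hBdef]; exact_mod_cast hB
  have hCr : (1:ℝ) ≤ C := by rw [hCdef]; exact_mod_cast hC
  have hDr : (1:ℝ) ≤ D := by rw [hDdef]; exact_mod_cast hD
  have hkr : (1:ℝ) ≤ (k:ℝ) := by exact_mod_cast hk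
  have hIdr : B * C - A * D = (k:ℝ) := by rw [hAdef, hBdef, hCdef, hDdef]; exact_mod_cast hIdm
  have hDrecr : D = (k:ℝ) * C + B := by rw [hBdef, hCdef, hDdef]; exact_mod_cast hDrec
  have hmul : ((k:ℝ) / B) * (1 / C) < 1 := by
    rw [div_mul_div_comm]
    rw [div_lt_one (by nlinarith)]
    nlinarith
  rw [Real.arctan_add hmul]
  have hA0 : A ≠ 0 := by linarith
  have hB0 : B ≠ 0 := by linarith
  have hC0 : C ≠ 0 := by linarith
  have hD0 : D ≠ 0 := by linarith
  have harg : ((k:ℝ)/B + 1/C) / (1 - (k:ℝ)/B * (1/C)) = 1 / A := by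
    have hne : B * C - (k:ℝ) ≠ 0 := by nlinarith
    field_simp
    nlinarith [hIdr, hDrecr, mul_pos (lt_of_lt_of_le zero_lt_one hAr) (lt_of_lt_of_le zero_lt_one hDr)]
  rw [harg]
end

section
/- The series ∑_{n=0}^{∞} arctan(k / F_{2n+3}) converges and its sum equals arctan(1/k), where arctan is the real inverse tangent function and the generalized Fibonacci numbers are regarded as real numbers. -/
theorem gen_fib_arctan_series (k : ℤ) (hk : 1 ≤ k) (F : ℤ → ℤ)
    (hF0 : F 0 = 0) (hF1 : F 1 = 1)
    (hFrec : ∀ n : ℤ, F (n + 1) = k * F n + F (n - 1)) :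
    HasSum (fun n : ℕ => Real.arctan ((k : ℝ) / (F (2 * (n : ℤ) + 3) : ℝ)))
      (Real.arctan (1 / (k : ℝ))) := by
  set f : ℕ → ℤ := fun n => F n with hf
  have hrec : ∀ n : ℕ, f (n + 2) = k * f (n + 1) + f n := by
    intro n
    have h := hFrec ((n : ℤ) + 1)
    have e1 : (n : ℤ) + 1 + 1 = ((n + 2 : ℕ) : ℤ) := by push_cast; ring
    have e2 : (n : ℤ) + 1 - 1 = ((n : ℕ) : ℤ) := by push_cast; ring
    have e3 : (n : ℤ) + 1 = ((n + 1 : ℕ) : ℤ) := by push_cast; ring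
    rw [e1, e2, e3] at h
    simp only [hf]
    exact h
  have hf0 : f 0 = 0 := by simpa [hf] using hF0
  have hf1 : f 1 = 1 := by simpa [hf] using hF1
  have hf2 : f 2 = k := by rw [hrec 0, hf0, hf1]; ring
  -- positivity
  have hpos : ∀ n : ℕ, 0 ≤ f n ∧ 0 < f (n + 1) := by
    intro n
    induction n with
    | zero => exact ⟨le_of_eq hf0.symm, by rw [hf1]; norm_num⟩
    | succ m ih =>
      refine ⟨ih.2.le, ?_⟩
      rw [hrec m]
      nlinarith [ih.1, ih.2]
  have hpos1 : ∀ n : ℕ, 0 < f (n + 1) := fun n => (hpos n).2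
  -- growth : f (n+2) ≥ n+1
  have hgrow : ∀ n : ℕ, (n : ℤ) + 1 ≤ f (n + 2) := by
    intro n
    induction n with
    | zero => rw [hf2]; simpa using hk
    | succ m ih =>
      rw [hrec (m + 1)]
      have h1 := hpos1 m
      push_cast
      nlinarith [hpos1 (m + 1)]
  -- key identity E n : f n * f (n+3) - f (n+1) * f (n+2) = (-1)^(n+1) * k
  have hE : ∀ n : ℕ, f n * f (n + 3) - f (n + 1) * f (n + 2) = (-1 : ℤ) ^ (n + 1) * k := by
    intro n
    induction n with
    | zero => rw [hf0, hf1, hf2]; ring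
    | succ m ih =>
      have h3 := hrec (m + 1)
      have h4 := hrec (m + 2)
      have : f (m + 1) * f (m + 4) - f (m + 2) * f (m + 3)
          = -(f m * f (m + 3) - f (m + 1) * f (m + 2)) := by
        have e4 : f (m + 4) = k * f (m + 3) + f (m + 2) := hrec (m + 2)
        have e0 : f (m + 2) = k * f (m + 1) + f m := hrec m
        linear_combination f (m + 1) * e4 - f (m + 3) * e0
      rw [show m + 1 + 3 = m + 4 from rfl, show m + 1 + 1 = m + 2 from rfl,
        show m + 1 + 2 = m + 3 from rfl, this, ih]
      ring
  -- real-valued positivity facts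
  have hkR : (0 : ℝ) < (k : ℝ) := by exact_mod_cast lt_of_lt_of_le one_pos hk
  have hfR : ∀ n : ℕ, (0 : ℝ) < (f (n + 1) : ℝ) := fun n => by exact_mod_cast hpos1 n
  set g : ℕ → ℝ := fun n => Real.arctan (1 / (f (2 * n + 2) : ℝ)) with hg
  -- telescoping identity
  have hterm : ∀ n : ℕ, Real.arctan ((k : ℝ) / (f (2 * n + 3) : ℝ)) = g n - g (n + 1) := by
    intro n
    have hc : (0 : ℝ) < (f (2 * n + 3) : ℝ) := hfR (2 * n + 2)
    have hb : (0 : ℝ) < (f (2 * n + 4) : ℝ) := hfR (2 * n + 3)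
    have ha : (0 : ℝ) < (f (2 * n + 2) : ℝ) := hfR (2 * n + 1)
    have hbk : (k : ℝ) + 1 ≤ (f (2 * n + 4) : ℝ) := by
      have := hrec (2 * n + 2)
      have h1 : (1 : ℤ) ≤ f (2 * n + 3) := hpos1 (2 * n + 2)
      have h2 : (1 : ℤ) ≤ f (2 * n + 2) := hpos1 (2 * n + 1)
      have : (k : ℤ) + 1 ≤ f (2 * n + 4) := by
        rw [show (2 : ℕ) * n + 4 = (2 * n + 2) + 2 from rfl, hrec (2 * n + 2)]
        nlinarith
      exact_mod_cast this
    have hc1 : (1 : ℝ) ≤ (f (2 * n + 3) : ℝ) := by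
      exact_mod_cast (hpos1 (2 * n + 2))
    have hlt : (k : ℝ) / (f (2 * n + 3) : ℝ) * (1 / (f (2 * n + 4) : ℝ)) < 1 := by
      rw [div_mul_div_comm, div_lt_one (by positivity)]
      nlinarith
    have hadd := Real.arctan_add hlt
    -- identity : f (2n+2) * f (2n+5) = f (2n+3) * f(2n+4) - k
    have hid : (f (2 * n + 2) : ℤ) * f (2 * n + 5) = f (2 * n + 3) * f (2 * n + 4) - k := by
      have := hE (2 * n + 2)
      have hpow : ((-1 : ℤ)) ^ (2 * n + 2 + 1) = -1 :=
        Odd.neg_one_pow ⟨n + 1, by ring⟩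
      rw [show (2 : ℕ) * n + 2 + 3 = 2 * n + 5 from rfl,
        show (2 : ℕ) * n + 2 + 1 = 2 * n + 3 from rfl,
        show (2 : ℕ) * n + 2 + 2 = 2 * n + 4 from rfl, hpow] at this
      linarith
    have hid5 : (f (2 * n + 5) : ℤ) = k * f (2 * n + 4) + f (2 * n + 3) := hrec (2 * n + 3)
    have hval : ((k : ℝ) / (f (2 * n + 3) : ℝ) + 1 / (f (2 * n + 4) : ℝ)) /
        (1 - (k : ℝ) / (f (2 * n + 3) : ℝ) * (1 / (f (2 * n + 4) : ℝ)))
        = 1 / (f (2 * n + 2) : ℝ) := by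
      have hidR : ((f (2 * n + 2) : ℝ)) * (f (2 * n + 5) : ℝ)
          = (f (2 * n + 3) : ℝ) * (f (2 * n + 4) : ℝ) - (k : ℝ) := by exact_mod_cast hid
      have hid5R : ((f (2 * n + 5) : ℝ)) = (k : ℝ) * (f (2 * n + 4) : ℝ) + (f (2 * n + 3) : ℝ) := by
        exact_mod_cast hid5
      have h5 : (0 : ℝ) < (f (2 * n + 5) : ℝ) := hfR (2 * n + 4)
      have hne : (f (2 * n + 3) : ℝ) * (f (2 * n + 4) : ℝ) - (k : ℝ) ≠ 0 := by
        rw [← hidR]; positivity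
      field_simp
      nlinarith [hidR, hid5R]
    rw [hval] at hadd
    have : g n = Real.arctan ((k : ℝ) / (f (2 * n + 3) : ℝ)) + g (n + 1) := by
      rw [hg]
      simp only
      rw [show (2 : ℕ) * (n + 1) + 2 = 2 * n + 4 by ring, ← hadd]
    linarith [this]
  -- g tends to 0
  have hg0 : Filter.Tendsto g Filter.atTop (nhds 0) := by
    have hsq : ∀ n : ℕ, 0 ≤ 1 / (f (2 * n + 2) : ℝ) ∧
        1 / (f (2 * n + 2) : ℝ) ≤ 1 / ((n : ℝ) + 1) := by
      intro n
      have h1 : (0 : ℝ) < (f (2 * n + 2) : ℝ) := hfR (2 * n + 1)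
      have h2 : ((n : ℝ)) + 1 ≤ (f (2 * n + 2) : ℝ) := by
        have := hgrow (2 * n)
        have : ((2 * n : ℕ) : ℤ) + 1 ≤ f (2 * n + 2) := this
        have h3 : ((2 * (n : ℝ)) + 1 : ℝ) ≤ (f (2 * n + 2) : ℝ) := by exact_mod_cast this
        nlinarith [Nat.cast_nonneg (α := ℝ) n]
      constructor
      · positivity
      · apply one_div_le_one_div_of_le (by positivity) h2
    have htend : Filter.Tendsto (fun n : ℕ => 1 / (f (2 * n + 2) : ℝ)) Filter.atTop (nhds 0) := by
      apply squeeze_zero (fun n => (hsq n).1) (fun n => (hsq n).2)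
      have := tendsto_one_div_add_atTop_nhds_zero_nat (𝕜 := ℝ)
      simpa using this
    have : Filter.Tendsto g Filter.atTop (nhds (Real.arctan 0)) :=
      (Real.continuous_arctan.continuousAt.tendsto).comp htend
    simpa [Real.arctan_zero] using this
  -- rewrite to natural-indexed f
  have hFf : ∀ n : ℕ, (F (2 * (n : ℤ) + 3) : ℝ) = (f (2 * n + 3) : ℝ) := by
    intro n
    have : (2 * (n : ℤ) + 3) = ((2 * n + 3 : ℕ) : ℤ) := by push_cast; ring
    rw [this, hf]
  have hmain : HasSum (fun n : ℕ => Real.arctan ((k : ℝ) / (f (2 * n + 3) : ℝ))) (g 0) := by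
    have hnonneg : ∀ n : ℕ, 0 ≤ Real.arctan ((k : ℝ) / (f (2 * n + 3) : ℝ)) := by
      intro n
      have : Real.arctan 0 ≤ Real.arctan ((k : ℝ) / (f (2 * n + 3) : ℝ)) :=
        Real.arctan_strictMono.monotone (div_nonneg hkR.le (hfR (2 * n + 2)).le)
      simpa [Real.arctan_zero] using this
    rw [hasSum_iff_tendsto_nat_of_nonneg hnonneg]
    have hps : ∀ n : ℕ, ∑ i ∈ Finset.range n, Real.arctan ((k : ℝ) / (f (2 * i + 3) : ℝ))
        = g 0 - g n := by
      intro n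
      rw [← Finset.sum_range_sub' g n]
      exact Finset.sum_congr rfl fun i _ => hterm i
    simp only [hps]
    have : Filter.Tendsto (fun n : ℕ => g 0 - g n) Filter.atTop (nhds (g 0 - 0)) :=
      Filter.Tendsto.sub tendsto_const_nhds hg0
    simpa using this
  have hgz : g 0 = Real.arctan (1 / (k : ℝ)) := by
    rw [hg]
    norm_num [hf2]
  rw [← hgz]
  simp only [hFf]
  exact hmain
end

section
/- For every integer n ≥ 1, the finite sum of reciprocals ∑_{j=0}^{n} 1/F_{2^j} (as rational numbers) equals (k + 2)/k − F_{2^n − 1}/F_{2^n}. -/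
theorem gen_fib_sum_reciprocals (k : ℤ) (hk : 1 ≤ k) (F : ℤ → ℤ)
    (hF0 : F 0 = 0) (hF1 : F 1 = 1)
    (hFrec : ∀ n : ℤ, F (n + 1) = k * F n + F (n - 1)) :
    ∀ n : ℤ, 1 ≤ n →
      ∑ j ∈ Finset.Icc (0 : ℤ) n, (1 : ℚ) / (F (2 ^ j.toNat) : ℚ) =
        ((k : ℚ) + 2) / (k : ℚ) -
          (F (2 ^ n.toNat - 1) : ℚ) / (F (2 ^ n.toNat) : ℚ) := by
  have hrec2 : ∀ x : ℤ, F (x + 2) = k * F (x + 1) + F x := by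
    intro x
    have h := hFrec (x + 1)
    rw [show x + 1 + 1 = x + 2 from by ring, show x + 1 - 1 = x from by ring] at h
    exact h
  -- positivity
  have hpos : ∀ m : ℕ, 0 ≤ F m ∧ 1 ≤ F (m + 1) := by
    intro m
    induction m with
    | zero => norm_num [hF0, hF1]
    | succ m ih =>
      obtain ⟨h0, h1⟩ := ih
      refine ⟨le_trans zero_le_one h1, ?_⟩
      have h2 := hrec2 (m : ℤ)
      push_cast
      rw [show (m : ℤ) + 1 + 1 = (m : ℤ) + 2 from by ring, h2]
      nlinarith
  -- addition formula
  have hadd : ∀ b a : ℕ, F (a + b + 1) = F (a + 1) * F (b + 1) + F a * F b := by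
    have key : ∀ b : ℕ,
        (∀ a : ℕ, F (a + b + 1) = F (a + 1) * F (b + 1) + F a * F b) ∧
        (∀ a : ℕ, F ((a : ℤ) + b + 2) = F (a + 1) * F ((b : ℤ) + 2) + F a * F (b + 1)) := by
      intro b
      induction b with
      | zero =>
        constructor
        · intro a
          push_cast
          simp [hF0, hF1]
        · intro a
          push_cast
          have h2 : F 2 = k := by
            have := hrec2 0
            simpa [hF0, hF1] using this
          rw [show (a : ℤ) + 0 + 2 = (a : ℤ) + 2 from by ring, hrec2 (a : ℤ), h2, hF1]
          ring
      | succ b ih =>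
        obtain ⟨ih1, ih2⟩ := ih
        constructor
        · intro a
          have := ih2 a
          push_cast
          rw [show (a : ℤ) + (b + 1) + 1 = (a : ℤ) + b + 2 from by ring, this]
          ring
        · intro a
          push_cast
          have e1 := ih1 a
          have e2 := ih2 a
          push_cast at e1 e2
          have e3 := hrec2 ((a : ℤ) + b + 1)
          have e4 := hrec2 ((b : ℤ) + 1)
          rw [show (a : ℤ) + b + 1 + 2 = (a : ℤ) + (b + 1) + 2 from by ring,
            show (a : ℤ) + b + 1 + 1 = (a : ℤ) + b + 2 from by ring] at e3
          rw [show (b : ℤ) + 1 + 1 = (b : ℤ) + 2 from by ring]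
          rw [show (b : ℤ) + 1 + 1 = (b : ℤ) + 2 from by ring] at e4
          linear_combination e3 + k * e2 + e1 - F ((a : ℤ) + 1) * e4 -
            F (a : ℤ) * hrec2 (b : ℤ)
    exact fun b a => (key b).1 a
  -- Cassini
  have hcas : ∀ t : ℕ, F (t + 2) * F t - F (t + 1) ^ 2 = (-1 : ℤ) ^ (t + 1) := by
    intro t
    induction t with
    | zero => simp [hF0, hF1]
    | succ t ih =>
      have e3 := hrec2 (t : ℤ)
      have e4 := hrec2 ((t : ℤ) + 1)
      push_cast at ih ⊢
      rw [show (t : ℤ) + 1 + 1 = (t : ℤ) + 2 from by ring]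
      rw [show (t : ℤ) + 1 + 1 = (t : ℤ) + 2 from by ring] at e4
      rw [show ((-1 : ℤ)) ^ (t + 1 + 1) = -(-1 : ℤ) ^ (t + 1) from by ring]
      linear_combination -ih + F ((t : ℤ) + 1) * e4 - F ((t : ℤ) + 2) * e3
  -- doubling formulas
  have hdbl1 : ∀ s : ℕ, F (2 * s + 1) = F (s + 1) ^ 2 + F s ^ 2 := by
    intro s
    have := hadd s s
    push_cast at this ⊢
    rw [show 2 * (s : ℤ) + 1 = (s : ℤ) + s + 1 from by ring, this]
    ring
  have hdbl2 : ∀ s : ℕ, F (2 * s + 2) = F (s + 1) * F (s + 2) + F s * F (s + 1) := by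
    intro s
    have := hadd (s + 1) s
    push_cast at this ⊢
    rw [show 2 * (s : ℤ) + 2 = (s : ℤ) + (s + 1) + 1 from by ring, this]
    ring
  -- key step identity: for m = 2s'+2 (even, ≥ 2),
  -- F (m-1) * F (2m) - F (2m-1) * F m = F m
  have hkey : ∀ s : ℕ,
      F (2 * s + 1) * F (4 * s + 4) - F (4 * s + 3) * F (2 * s + 2) = F (2 * s + 2) := by
    intro s
    have d2 := hdbl2 (2 * s + 1)
    have d1 := hdbl1 (2 * s + 1)
    have c := hcas (2 * s + 1)
    push_cast at d1 d2 c ⊢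
    rw [show 4 * (s : ℤ) + 4 = 2 * (2 * s + 1) + 2 from by ring,
      show 4 * (s : ℤ) + 3 = 2 * (2 * s + 1) + 1 from by ring, d2, d1]
    rw [show (-1 : ℤ) ^ (2 * s + 1 + 1) = 1 from by
      rw [show 2 * s + 1 + 1 = 2 * (s + 1) from by ring, pow_mul]; norm_num] at c
    rw [show 2 * (s : ℤ) + 1 + 2 = 2 * s + 3 from by ring,
      show 2 * (s : ℤ) + 1 + 1 = 2 * s + 2 from by ring] at d2 c ⊢
    linear_combination F (2 * (s : ℤ) + 2) * c
  have hk0 : (k : ℚ) ≠ 0 := by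
    have : (0 : ℤ) < k := by omega
    exact_mod_cast this.ne'
  have h2 : F 2 = k := by
    have := hrec2 0
    simpa [hF0, hF1] using this
  -- positivity in handy form
  have hFpos : ∀ m : ℕ, 1 ≤ m → (0 : ℤ) < F m := by
    intro m hm
    obtain ⟨t, rfl⟩ := Nat.exists_eq_add_of_le hm
    have h := (hpos t).2
    have hc : ((1 + t : ℕ) : ℤ) = (t : ℤ) + 1 := by push_cast; ring
    rw [hc]; linarith
  intro n hn
  refine Int.le_induction
    (motive := fun n _ => ∑ j ∈ Finset.Icc (0 : ℤ) n, (1 : ℚ) / (F (2 ^ j.toNat) : ℚ) =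
      ((k : ℚ) + 2) / (k : ℚ) - (F (2 ^ n.toNat - 1) : ℚ) / (F (2 ^ n.toNat) : ℚ))
    ?_ (fun n hn1 ih => ?_) n hn
  · beta_reduce
    rw [show Finset.Icc (0 : ℤ) 1 = {0, 1} from by decide]
    rw [Finset.sum_insert (by decide), Finset.sum_singleton]
    norm_num [hF1, h2]
    field_simp
    ring
  · beta_reduce
    beta_reduce at ih
    have ih' := ih
    have hsplit : Finset.Icc (0 : ℤ) (n + 1) = insert (n + 1) (Finset.Icc 0 n) := by
      ext x
      simp only [Finset.mem_Icc, Finset.mem_insert]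
      omega
    rw [hsplit, Finset.sum_insert (by simp), ih']
    have htn : (n + 1).toNat = n.toNat + 1 := by omega
    -- m = 2 ^ n.toNat, with n.toNat ≥ 1 so m = 2s with s ≥ 1, so m = 2s'+2
    obtain ⟨t, ht⟩ : ∃ t : ℕ, n.toNat = t + 1 := ⟨n.toNat - 1, by omega⟩
    set s : ℕ := 2 ^ t - 1 with hs
    have hm : 2 ^ n.toNat = 2 * s + 2 := by
      rw [ht, pow_succ]
      have : 1 ≤ 2 ^ t := Nat.one_le_two_pow
      omega
    have hm2 : 2 ^ (n + 1).toNat = 4 * s + 4 := by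
      rw [htn, pow_succ, hm]; ring
    have key := hkey s
    have p1 : (0 : ℤ) < F (2 * s + 2) := hFpos (2 * s + 2) (by omega)
    have p2 : (0 : ℤ) < F (4 * s + 4) := hFpos (4 * s + 4) (by omega)
    -- rewrite all indices
    have e1 : (2 : ℤ) ^ (n + 1).toNat = 4 * (s : ℤ) + 4 := by
      rw [show (2 : ℤ) = ((2 : ℕ) : ℤ) from rfl, ← Nat.cast_pow, hm2]; push_cast; ring
    have e2 : (2 : ℤ) ^ n.toNat = 2 * (s : ℤ) + 2 := by
      rw [show (2 : ℤ) = ((2 : ℕ) : ℤ) from rfl, ← Nat.cast_pow, hm]; push_cast; ring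
    rw [e1, e2, show 2 * (s : ℤ) + 2 - 1 = 2 * s + 1 from by ring,
      show 4 * (s : ℤ) + 4 - 1 = 4 * s + 3 from by ring]
    have q1 : (0 : ℚ) < (F (2 * (s : ℤ) + 2) : ℚ) := by exact_mod_cast p1
    have q2 : (0 : ℚ) < (F (4 * (s : ℤ) + 4) : ℚ) := by exact_mod_cast p2
    have qkey : (F (2 * (s : ℤ) + 1) : ℚ) * (F (4 * (s : ℤ) + 4) : ℚ) -
        (F (4 * (s : ℤ) + 3) : ℚ) * (F (2 * (s : ℤ) + 2) : ℚ) = (F (2 * (s : ℤ) + 2) : ℚ) := by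
      exact_mod_cast key
    field_simp
    linear_combination (-(k : ℚ)) * qkey
end

section
/- Let k be an odd integer with k > 1. A positive integer n is a generalized Fibonacci number (i.e., n = F_m for some integer m ≥ 1) if and only if n²·(k² + 4) + 4 is a perfect square or n²·(k² + 4) − 4 is a perfect square. -/
set_option maxHeartbeats 1000000

theorem gen_fib_perfect_square_criterion (k : ℤ) (hk : 1 < k) (hodd : Odd k)
    (F : ℤ → ℤ) (hF0 : F 0 = 0) (hF1 : F 1 = 1)
    (hFrec : ∀ n : ℤ, F (n + 1) = k * F n + F (n - 1)) :
    ∀ n : ℤ, 0 < n →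
      ((∃ m : ℤ, 1 ≤ m ∧ n = F m) ↔
        ((∃ y : ℤ, n ^ 2 * (k ^ 2 + 4) + 4 = y ^ 2) ∨
         (∃ y : ℤ, n ^ 2 * (k ^ 2 + 4) - 4 = y ^ 2))) := by
  have hF2 : F 2 = k := by
    have h := hFrec 1
    norm_num [hF0, hF1] at h
    exact h
  -- Catalan-type identity
  have hcat : ∀ m : ℤ, 1 ≤ m →
      F (m+1) * F (m-1) - F m ^ 2 = 1 ∨ F (m+1) * F (m-1) - F m ^ 2 = -1 := by
    intro m
    refine Int.le_induction (motive := fun m _ => F (m+1) * F (m-1) - F m ^ 2 = 1 ∨ F (m+1) * F (m-1) - F m ^ 2 = -1) ?_ ?_ m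
    · right
      norm_num [hF0, hF1]
    · intro m hm ih
      rw [show m + 1 - 1 = m from by ring]
      have h1 := hFrec (m+1)
      rw [show m + 1 - 1 = m from by ring] at h1
      have h2 := hFrec m
      rcases ih with h | h
      · right; linear_combination F m * h1 - F (m+1) * h2 - h
      · left; linear_combination F m * h1 - F (m+1) * h2 - h
  -- Lucas identity
  have hid : ∀ m : ℤ, (F (m+1) + F (m-1))^2 - (k^2+4) * F m ^ 2
      = 4 * (F (m+1) * F (m-1) - F m ^ 2) := by
    intro m
    linear_combination (F (m+1) - F (m-1) + k * F m) * hFrec m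
  -- descent lemma
  have key : ∀ N : ℕ, ∀ n x : ℤ, 1 ≤ n → n ≤ (N : ℤ) → 0 ≤ x →
      (x^2 - (k^2+4) * n^2 = 4 ∨ x^2 - (k^2+4)*n^2 = -4) →
      ∃ m : ℤ, 1 ≤ m ∧ n = F m ∧ x = F (m+1) + F (m-1) := by
    intro N
    induction N with
    | zero => intro n x h1 h2 _ _; exfalso; omega
    | succ N ih =>
      intro n x h1 h2 hx heq
      by_cases hn1 : n = 1
      · subst hn1
        have hxk : x = k := by
          rcases heq with h | h
          · exfalso
            -- x^2 = k^2 + 8 : impossible by parity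
            obtain ⟨s, hs⟩ := hodd
            have hxodd : Odd x := by
              rcases Int.even_or_odd x with ⟨a, ha⟩ | ho
              · exfalso
                have h9 : 4 * (a^2 - s^2 - s) = 9 := by
                  linear_combination h - (x + a + a) * ha + (k + 2*s + 1) * hs
                generalize a^2 - s^2 - s = c at h9
                omega
              · exact ho
            obtain ⟨a, ha⟩ := hxodd
            -- x > k, x odd, k odd, so x ≥ k + 2
            have hkx : k < x := by nlinarith
            have hx2 : k + 2 ≤ x := by omega
            nlinarith
          · -- x^2 = k^2
            have h0 : (x - k) * (x + k) = 0 := by linear_combination h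
            rcases mul_eq_zero.mp h0 with h' | h'
            · linarith
            · exfalso; linarith
        refine ⟨1, le_refl 1, by rw [hF1], ?_⟩
        norm_num [hF0, hF2, hxk]
      · have hn2 : 2 ≤ n := by omega
        have hlow : (k^2+4)*n^2 - 4 ≤ x^2 := by rcases heq with h | h <;> linarith
        have hhigh : x^2 ≤ (k^2+4)*n^2 + 4 := by rcases heq with h | h <;> linarith
        have hkn0 : 0 ≤ k * n := mul_nonneg (by linarith) (by linarith)
        -- x > k * n
        have hsq1 : (k*n)^2 < x^2 := by nlinarith [hlow, hn2]
        have hkn : k * n < x := by nlinarith [hsq1, hkn0, hx]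
        -- parity facts
        have hxn : Even (x - n) := by
          obtain ⟨s, hs⟩ := hodd
          have h1' : Even (x^2 - n^2) := by
            rcases heq with h | h
            · exact ⟨(2*s^2 + 2*s + 2)*n^2 + 2, by
                linear_combination h + n^2*(k + 2*s + 1)*hs⟩
            · exact ⟨(2*s^2 + 2*s + 2)*n^2 - 2, by
                linear_combination h + n^2*(k + 2*s + 1)*hs⟩
          have h2' := Int.even_sub.mp h1'
          rw [Int.even_pow, Int.even_pow] at h2'
          refine Int.even_sub.mpr ?_
          constructor
          · intro hh; exact (h2'.mp ⟨hh, by norm_num⟩).1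
          · intro hh; exact (h2'.mpr ⟨hh, by norm_num⟩).1
        have hek : Even (k - 1) := by
          obtain ⟨s, hs⟩ := hodd
          exact ⟨s, by omega⟩
        have he3 : Even (k^2 + 3) := by
          obtain ⟨s, hs⟩ := hodd
          exact ⟨2*s^2 + 2*s + 2, by linear_combination (k + 2*s + 1)*hs⟩
        have h2n : Even (x - k*n) := by
          have e : x - k*n = (x - n) - (k-1)*n := by ring
          rw [e]
          exact hxn.sub (hek.mul_right n)
        have h2x : Even (n*(k^2+4) - k*x) := by
          have hnx : Even (n - x) := by
            have := hxn.neg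
            rwa [neg_sub] at this
          have e : n*(k^2+4) - k*x = (n*(k^2+3) - (k-1)*x) + (n - x) := by ring
          rw [e]
          exact ((he3.mul_left n).sub (hek.mul_right x)).add hnx
        obtain ⟨n', hn'⟩ := h2n
        obtain ⟨x', hx'⟩ := h2x
        -- bounds
        have hn'pos : 1 ≤ n' := by
          have h0' : 0 < n' + n' := by linarith
          omega
        have hsq2 : x^2 < ((k+2)*n)^2 := by nlinarith [hhigh, hn2, hk]
        have hxlt : x < (k+2)*n := by
          nlinarith [hsq2, hx, mul_nonneg (by linarith : (0:ℤ) ≤ k+2) (by linarith : (0:ℤ) ≤ n)]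
        have hxlt2 : x - k*n < 2*n := by nlinarith [hxlt]
        have hn'lt : n' ≤ (N : ℤ) := by
          have : n' < n := by linarith
          omega
        have hn21 : 1 ≤ n^2 := by nlinarith
        have hsq3 : (k*x)^2 < (n*(k^2+4))^2 := by
          nlinarith [mul_le_mul_of_nonneg_left hhigh (sq_nonneg k), hn21, sq_nonneg k]
        have hkx0 : 0 ≤ k * x := mul_nonneg (by linarith) hx
        have hnD0 : 0 ≤ n * (k^2+4) := mul_nonneg (by linarith) (by positivity)
        have hkx : k * x < n * (k^2+4) := by nlinarith [hsq3, hkx0, hnD0]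
        have hx'pos : 0 ≤ x' := by linarith
        -- new equation
        have heq' : x'^2 - (k^2+4) * n'^2 = 4 ∨ x'^2 - (k^2+4)*n'^2 = -4 := by
          rcases heq with h | h
          · right
            have h4 : 4*(x'^2 - (k^2+4)*n'^2) = -16 := by
              linear_combination (-(x' + x' + (n*(k^2+4) - k*x)))*hx' +
                ((k^2+4)*(n' + n' + (x - k*n)))*hn' - 4*h
            linarith
          · left
            have h4 : 4*(x'^2 - (k^2+4)*n'^2) = 16 := by
              linear_combination (-(x' + x' + (n*(k^2+4) - k*x)))*hx' +
                ((k^2+4)*(n' + n' + (x - k*n)))*hn' - 4*h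
            linarith
        obtain ⟨m, hm, hnm, hxm⟩ := ih n' x' hn'pos hn'lt hx'pos heq'
        have g2 : 2*x' + 2*k*n' = 4*n := by linear_combination -hx' - k*hn'
        have g3 : 2*k*x' + 2*(k^2+4)*n' = 4*x := by
          linear_combination -k*hx' - (k^2+4)*hn'
        refine ⟨m+1, by linarith, ?_, ?_⟩
        · rw [hnm, hxm] at g2
          have hr := hFrec m
          linarith
        · rw [show m+1+1 = m+2 from by ring, show m+1-1 = m from by ring]
          rw [hnm, hxm] at g3
          have r1 := hFrec (m+1)
          rw [show m+1-1 = m from by ring, show m+1+1 = m+2 from by ring] at r1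
          have r2 := hFrec m
          have goal4 : 4*x = 4*F (m+2) + 4*F m := by
            linear_combination -g3 - 4*r1 - 2*k*r2
          linarith
  intro n hn
  constructor
  · rintro ⟨m, hm, rfl⟩
    rcases hcat m hm with h | h
    · left
      exact ⟨F (m+1) + F (m-1), by linear_combination -hid m - 4*h⟩
    · right
      exact ⟨F (m+1) + F (m-1), by linear_combination -hid m - 4*h⟩
  · intro h
    have hle : n ≤ (n.toNat : ℤ) := Int.self_le_toNat n
    rcases h with ⟨y, hy⟩ | ⟨y, hy⟩
    · obtain ⟨m, hm, hnm, _⟩ := key n.toNat n |y| (by omega) hle (abs_nonneg y)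
        (Or.inl (by linear_combination sq_abs y - hy))
      exact ⟨m, hm, hnm⟩
    · obtain ⟨m, hm, hnm, _⟩ := key n.toNat n |y| (by omega) hle (abs_nonneg y)
        (Or.inr (by linear_combination sq_abs y - hy))
      exact ⟨m, hm, hnm⟩
end

section
/- Let k be an integer with k > 1. For positive integers x and y: (i) y² − k·x·y − x² = 1 holds if and only if there exists an integer n ≥ 1 with x = F_{2n} and y = F_{2n+1}; (ii) y² − k·x·y − x² = −1 holds if and only if there exists an integer n ≥ 1 with x = F_{2n−1} and y = F_{2n}. -/
theorem gen_fib_integer_points (k : ℤ) (hk : 1 < k)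
    (F : ℤ → ℤ) (hF0 : F 0 = 0) (hF1 : F 1 = 1)
    (hFrec : ∀ n : ℤ, F (n + 1) = k * F n + F (n - 1)) :
    ∀ x y : ℤ, 0 < x → 0 < y →
      ((y ^ 2 - k * x * y - x ^ 2 = 1 ↔
        ∃ n : ℤ, 1 ≤ n ∧ x = F (2 * n) ∧ y = F (2 * n + 1)) ∧
       (y ^ 2 - k * x * y - x ^ 2 = -1 ↔
        ∃ n : ℤ, 1 ≤ n ∧ x = F (2 * n - 1) ∧ y = F (2 * n))) := by
  have hrec2 : ∀ n : ℤ, F (n + 2) = k * F (n + 1) + F n := by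
    intro n
    have h := hFrec (n + 1)
    rw [show n + 1 + 1 = n + 2 by ring, show n + 1 - 1 = n by ring] at h
    exact h
  have hid : ∀ m : ℕ, (F ((m : ℤ) + 1)) ^ 2 - k * F (m : ℤ) * F ((m : ℤ) + 1)
      - (F (m : ℤ)) ^ 2 = (-1 : ℤ) ^ m := by
    intro m
    induction m with
    | zero => simp [hF0, hF1]
    | succ m ih =>
      have h := hrec2 (m : ℤ)
      push_cast
      rw [show ((m : ℤ) + 1 + 1) = (m : ℤ) + 2 by ring, h]
      rw [pow_succ]
      linear_combination (-1 : ℤ) * ih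
  have hQ : ∀ n : ℤ, 1 ≤ n →
      ((F (2 * n + 1)) ^ 2 - k * F (2 * n) * F (2 * n + 1) - (F (2 * n)) ^ 2 = 1 ∧
       (F (2 * n)) ^ 2 - k * F (2 * n - 1) * F (2 * n) - (F (2 * n - 1)) ^ 2 = -1) := by
    intro n hn
    set m : ℕ := (2 * n - 1).toNat with hmdef
    have hm : (m : ℤ) = 2 * n - 1 := by omega
    have hodd : Odd m := by
      rw [Nat.odd_iff]; omega
    constructor
    · have h := hid (m + 1)
      push_cast at h
      rw [show (m : ℤ) + 1 + 1 = 2 * n + 1 by omega, show (m : ℤ) + 1 = 2 * n by omega,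
        show ((-1 : ℤ)) ^ (m + 1) = 1 by rw [pow_succ, hodd.neg_one_pow]; ring] at h
      exact h
    · have h := hid m
      rw [hm, show (2 * n - 1 : ℤ) + 1 = 2 * n by ring, hodd.neg_one_pow] at h
      exact h
  have main : ∀ N : ℕ, ∀ x y : ℤ, x ≤ (N : ℤ) → 0 < x → 0 < y →
      ((y ^ 2 - k * x * y - x ^ 2 = 1 →
        ∃ n : ℤ, 1 ≤ n ∧ x = F (2 * n) ∧ y = F (2 * n + 1)) ∧
       (y ^ 2 - k * x * y - x ^ 2 = -1 →
        ∃ n : ℤ, 1 ≤ n ∧ x = F (2 * n - 1) ∧ y = F (2 * n))) := by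
    intro N
    induction N with
    | zero => intro x y h1 h2 h3; exfalso; omega
    | succ N ih =>
      intro x y hxN hx hy
      constructor
      · intro h1
        have hxy : k * x < y := by nlinarith
        have h2 : x ^ 2 - k * (y - k * x) * x - (y - k * x) ^ 2 = -1 := by
          linear_combination -h1
        have hlt : y - k * x < x := by nlinarith
        obtain ⟨n, hn, ha, hb⟩ := (ih (y - k * x) x (by omega) (by omega) hx).2 h2
        refine ⟨n, hn, hb, ?_⟩
        have h3 := hFrec (2 * n)
        rw [h3]; linear_combination ha + k * hb
      · intro h1
        by_cases hc : k * x < y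
        · have h2 : x ^ 2 - k * (y - k * x) * x - (y - k * x) ^ 2 = 1 := by
            linear_combination -h1
          have hlt : y - k * x < x := by nlinarith
          obtain ⟨n, hn, ha, hb⟩ := (ih (y - k * x) x (by omega) (by omega) hx).1 h2
          refine ⟨n + 1, by omega, ?_, ?_⟩
          · rw [show 2 * (n + 1) - 1 = 2 * n + 1 by ring]; exact hb
          · have h3 := hFrec (2 * n + 1)
            rw [show 2 * n + 1 - 1 = 2 * n by ring,
              show 2 * n + 1 + 1 = 2 * (n + 1) by ring] at h3
            rw [h3]; linear_combination ha + k * hb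
        · push_neg at hc
          have hx1 : x = 1 := by nlinarith
          have hyk : y = k := by
            have hz : y * (y - k) = 0 := by
              rw [hx1] at h1; linear_combination h1
            rcases mul_eq_zero.1 hz with h | h
            · omega
            · linarith
          refine ⟨1, le_refl 1, ?_, ?_⟩
          · rw [show 2 * (1 : ℤ) - 1 = 1 by ring, hF1]; exact hx1
          · have h3 := hFrec 1
            rw [show (1 : ℤ) - 1 = 0 by ring, hF0, hF1] at h3
            rw [show 2 * (1 : ℤ) = 1 + 1 by ring, h3]; linarith
  intro x y hx hy
  constructor
  · constructor
    · exact fun h => (main x.toNat x y (by omega) hx hy).1 h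
    · rintro ⟨n, hn, rfl, rfl⟩
      exact (hQ n hn).1
  · constructor
    · exact fun h => (main x.toNat x y (by omega) hx hy).2 h
    · rintro ⟨n, hn, rfl, rfl⟩
      exact (hQ n hn).2
end

section
/- For every integer n, the Carlitz-type identity Z_{n+1}³ − k³·Z_n³ − Z_{n−1}³ = 3k · Z_{n+1} · Z_n · Z_{n−1} holds both for Z = F (the generalized Fibonacci numbers) and for Z = L (the generalized Lucas numbers). -/
theorem gen_carlitz_identity (k : ℤ) (hk : 1 ≤ k)
    (F : ℤ → ℤ) (hF0 : F 0 = 0) (hF1 : F 1 = 1)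
    (hFrec : ∀ n : ℤ, F (n + 1) = k * F n + F (n - 1))
    (L : ℤ → ℤ) (hL0 : L 0 = 2) (hL1 : L 1 = k)
    (hLrec : ∀ n : ℤ, L (n + 1) = k * L n + L (n - 1)) :
    ∀ n : ℤ,
      (F (n + 1) ^ 3 - k ^ 3 * F n ^ 3 - F (n - 1) ^ 3 =
        3 * k * (F (n + 1) * F n * F (n - 1))) ∧
      (L (n + 1) ^ 3 - k ^ 3 * L n ^ 3 - L (n - 1) ^ 3 =
        3 * k * (L (n + 1) * L n * L (n - 1))) := by
  intro n
  constructor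
  · rw [hFrec n]; ring
  · rw [hLrec n]; ring
end
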